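/- arXiv:2109.03306 — 2 statements merged into one kernel-verified Lean document; each statement's English description precedes it below -/
import Mathlib

section
/- Composing two noncrossing perfect matchings of bottom/top points (stacking diagrams) yields a noncrossing perfect matching: the path-following composition of two planar diagrams on N strands is again a planar diagram on N strands. -/
/-- The circular position of a point of a planar diagram on `N` strands: the `2*N`
boundary points consist of `N` bottom points (indices `0,…,N-1`, left to right) and
`N` top points (indices `N,…,2*N-1`, left to right); going around the boundary of the
rectangle one meets the bottom points left to right and then the top points right to
left. -/
def diagPos (N : ℕ) (a : Fin (2*N)) : ℕ :=
  if (a : ℕ) < N then (a : ℕ) else 3*N - 1 - (a : ℕ)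

/-- A planar diagram on `N` strands (without closed loops): a noncrossing perfect
matching of the `N` bottom and `N` top boundary points, i.e. a fixed-point-free
involution of the `2*N` boundary points whose chords do not cross in the disk
(no `a, b, c, d` with circular positions `pos a < pos c < pos b < pos d` and
`a` matched to `b`, `c` matched to `d`). -/
def IsDiagram (N : ℕ) (m : Fin (2*N) → Fin (2*N)) : Prop :=
  (∀ a, m a ≠ a) ∧ (∀ a, m (m a) = a) ∧
  ∀ a b c d : Fin (2*N),
    diagPos N a < diagPos N c → diagPos N c < diagPos N b → diagPos N b < diagPos N d →
    m a = b → m c = d → False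

/-- One step along a strand in the two-layer stack of diagrams `m1` (bottom layer) and
`m2` (top layer): follow an edge of `m1`, follow an edge of `m2`, or cross the glued
middle interface (top point `N + j` of the bottom layer is glued to bottom point `j`
of the top layer). -/
def layerStep (N : ℕ) (m1 m2 : Fin (2*N) → Fin (2*N)) :
    (Fin (2*N) ⊕ Fin (2*N)) → (Fin (2*N) ⊕ Fin (2*N)) → Prop
  | .inl p, .inl q => m1 p = q ∨ m1 q = p
  | .inr p, .inr q => m2 p = q ∨ m2 q = p
  | .inl p, .inr q => (p : ℕ) = (q : ℕ) + N
  | .inr p, .inl q => (q : ℕ) = (p : ℕ) + N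

/-- Two points of the two-layer stack are connected if some path of strand segments
joins them. -/
def Conn (N : ℕ) (m1 m2 : Fin (2*N) → Fin (2*N))
    (x y : Fin (2*N) ⊕ Fin (2*N)) : Prop :=
  Relation.ReflTransGen (layerStep N m1 m2) x y

/-- The outer boundary point of the stacked diagram corresponding to `a`: bottom
points live on the bottom layer, top points on the top layer. -/
def outer (N : ℕ) (a : Fin (2*N)) : Fin (2*N) ⊕ Fin (2*N) :=
  if (a : ℕ) < N then Sum.inl a else Sum.inr a

/-- Composition (vertical stacking) of planar diagrams: the composite matches `a`
to the (unique, for genuine diagrams) other outer point connected to it by a path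
through the stack. -/
noncomputable def diagComp (N : ℕ) (m1 m2 : Fin (2*N) → Fin (2*N)) :
    Fin (2*N) → Fin (2*N) :=
  open scoped Classical in
  fun a => if h : ∃ b, b ≠ a ∧ Conn N m1 m2 (outer N a) (outer N b) then h.choose else a

/-- The identity diagram: `N` through-strands, matching bottom point `i` with top
point `N + i`. -/
def idDiag (N : ℕ) (a : Fin (2*N)) : Fin (2*N) :=
  if h : (a : ℕ) < N then ⟨(a : ℕ) + N, by omega⟩
  else ⟨(a : ℕ) - N, by have := a.isLt; omega⟩

/-- A point of the stack lying on a closed loop: it is connected to no outer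
boundary point. -/
def IsLoopPoint (N : ℕ) (m1 m2 : Fin (2*N) → Fin (2*N))
    (x : Fin (2*N) ⊕ Fin (2*N)) : Prop :=
  ∀ a : Fin (2*N), ¬ Conn N m1 m2 x (outer N a)

/-- The number of closed loops produced when stacking `m2` on top of `m1`: the number
of connected components of loop points. -/
noncomputable def numLoops (N : ℕ) (m1 m2 : Fin (2*N) → Fin (2*N)) : ℕ :=
  Nat.card (Quot (fun x y : {x // IsLoopPoint N m1 m2 x} => Conn N m1 m2 x.1 y.1))

/-- The `i`-th Temperley–Lieb generator diagram (`1 ≤ i ≤ N-1`), as a function on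
indices: it pairs bottom points `i-1, i` together (0-indexed: the `i`-th and
`(i+1)`-st bottom points), pairs top points `N+i-1, N+i` together, and pairs bottom
`j` with top `N+j` otherwise. -/
def genDiagNat (N i a : ℕ) : ℕ :=
  if a = i - 1 then i
  else if a = i then i - 1
  else if a = N + i - 1 then N + i
  else if a = N + i then N + i - 1
  else if a < N then a + N else a - N

/-- The `i`-th Temperley–Lieb generator diagram on `N` strands. -/
def genDiag (N i : ℕ) (a : Fin (2*N)) : Fin (2*N) :=
  ⟨genDiagNat N i (a : ℕ) % (2*N), Nat.mod_lt _ a.pos⟩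

namespace TL

lemma diagPos_lt (N : ℕ) (a : Fin (2*N)) : diagPos N a < 2*N := by
  have := a.isLt; unfold diagPos; split <;> omega

lemma diagPos_inj {N : ℕ} {a b : Fin (2*N)} (h : diagPos N a = diagPos N b) : a = b := by
  have ha := a.isLt; have hb := b.isLt
  unfold diagPos at h; apply Fin.ext; split at h <;> split at h <;> omega

lemma diagPos_lt_N_iff {N : ℕ} (a : Fin (2*N)) : diagPos N a < N ↔ (a : ℕ) < N := by
  have := a.isLt; unfold diagPos; split <;> omega

lemma diagPos_ge_N {N : ℕ} (a : Fin (2*N)) (h : N ≤ (a : ℕ)) : N ≤ diagPos N a := by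
  have := a.isLt; unfold diagPos; split <;> omega

variable {N : ℕ}

/-- matching map on the stack -/
def MM (m1 m2 : Fin (2*N) → Fin (2*N)) : (Fin (2*N) ⊕ Fin (2*N)) → (Fin (2*N) ⊕ Fin (2*N)) :=
  Sum.map m1 m2

/-- interface points -/
def Itf : (Fin (2*N) ⊕ Fin (2*N)) → Prop :=
  Sum.elim (fun p => N ≤ (p : ℕ)) (fun p => (p : ℕ) < N)

instance : DecidablePred (Itf (N := N)) := by
  intro z; cases z <;> simp only [Itf, Sum.elim_inl, Sum.elim_inr] <;> infer_instance

/-- gluing map on the stack -/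
def GG : (Fin (2*N) ⊕ Fin (2*N)) → (Fin (2*N) ⊕ Fin (2*N)) :=
  Sum.elim
    (fun p => if h : N ≤ (p : ℕ) then .inr ⟨(p : ℕ) - N, by have := p.isLt; omega⟩ else .inl p)
    (fun p => if h : (p : ℕ) < N then .inl ⟨(p : ℕ) + N, by have := p.isLt; omega⟩ else .inr p)

section basics

variable {m1 m2 : Fin (2*N) → Fin (2*N)} (h1 : IsDiagram N m1) (h2 : IsDiagram N m2)

include h1 h2

lemma MM_invol (z) : MM m1 m2 (MM m1 m2 z) = z := by
  cases z with
  | inl p => simp [MM, h1.2.1]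
  | inr p => simp [MM, h2.2.1]

lemma MM_ne (z) : MM m1 m2 z ≠ z := by
  cases z with
  | inl p => simp only [MM, Sum.map_inl, ne_eq, Sum.inl.injEq]; exact h1.1 p
  | inr p => simp only [MM, Sum.map_inr, ne_eq, Sum.inr.injEq]; exact h2.1 p

omit h1 h2

lemma GG_invol (z : Fin (2*N) ⊕ Fin (2*N)) : GG (GG z) = z := by
  cases z with
  | inl p =>
    have hp := p.isLt
    by_cases h : N ≤ (p : ℕ)
    · simp only [GG, Sum.elim_inl, dif_pos h, Sum.elim_inr]
      rw [dif_pos (show ((⟨(p:ℕ) - N, by omega⟩ : Fin (2*N)) : ℕ) < N by simp only [Fin.val_mk]; omega)]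
      congr 1; apply Fin.ext; simp only [Fin.val_mk]; omega
    · simp only [GG, Sum.elim_inl, dif_neg h]
  | inr p =>
    have hp := p.isLt
    by_cases h : (p : ℕ) < N
    · simp only [GG, Sum.elim_inr, dif_pos h, Sum.elim_inl]
      rw [dif_pos (show N ≤ ((⟨(p:ℕ) + N, by omega⟩ : Fin (2*N)) : ℕ) by simp only [Fin.val_mk]; omega)]
      congr 1; apply Fin.ext; simp only [Fin.val_mk]; omega
    · simp only [GG, Sum.elim_inr, dif_neg h]

lemma GG_eq_self_iff (z : Fin (2*N) ⊕ Fin (2*N)) : GG z = z ↔ ¬ Itf z := by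
  cases z with
  | inl p =>
    have hp := p.isLt
    by_cases h : N ≤ (p : ℕ) <;> simp [GG, Itf, h]
  | inr p =>
    by_cases h : (p : ℕ) < N <;> simp [GG, Itf, h]

lemma Itf_GG {z : Fin (2*N) ⊕ Fin (2*N)} (h : Itf z) : Itf (GG z) := by
  cases z with
  | inl p =>
    have hp := p.isLt; simp only [Itf, Sum.elim_inl] at h
    simp only [GG, Sum.elim_inl, dif_pos h, Itf, Sum.elim_inr]; simp; omega
  | inr p =>
    have hp := p.isLt; simp only [Itf, Sum.elim_inr] at h
    simp only [GG, Sum.elim_inr, dif_pos h, Itf, Sum.elim_inl]; simp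

lemma isLeft_MM (z) : (MM m1 m2 z).isLeft = z.isLeft := by cases z <;> simp [MM]

lemma isLeft_GG {z : Fin (2*N) ⊕ Fin (2*N)} (h : Itf z) : (GG z).isLeft = !z.isLeft := by
  cases z with
  | inl p => simp only [Itf, Sum.elim_inl] at h; simp [GG, dif_pos h]
  | inr p => simp only [Itf, Sum.elim_inr] at h; simp [GG, dif_pos h]

/-- value of GG on interface left points -/
lemma GG_inl {p : Fin (2*N)} (h : N ≤ (p : ℕ)) :
    GG (Sum.inl p) = Sum.inr ⟨(p : ℕ) - N, by have := p.isLt; omega⟩ := by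
  simp [GG, dif_pos h]

lemma GG_inr {p : Fin (2*N)} (h : (p : ℕ) < N) :
    GG (Sum.inr p) = Sum.inl ⟨(p : ℕ) + N, by have := p.isLt; omega⟩ := by
  simp [GG, dif_pos h]

include h1 h2

lemma step_iff (z w : Fin (2*N) ⊕ Fin (2*N)) :
    layerStep N m1 m2 z w ↔ (MM m1 m2 z = w ∨ (Itf z ∧ GG z = w)) := by
  cases z with
  | inl p =>
    cases w with
    | inl q =>
      constructor
      · rintro (h | h)
        · exact Or.inl (by simp [MM, h])
        · refine Or.inl ?_; simp only [MM, Sum.map_inl, Sum.inl.injEq]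
          rw [← h, h1.2.1]
      · rintro (h | ⟨hi, h⟩)
        · simp only [MM, Sum.map_inl, Sum.inl.injEq] at h; exact Or.inl h
        · simp only [Itf, Sum.elim_inl] at hi; rw [GG_inl hi] at h; exact absurd h (by simp)
    | inr q =>
      constructor
      · intro h
        have h' : (p:ℕ) = (q:ℕ) + N := h
        have hi : N ≤ (p : ℕ) := by omega
        refine Or.inr ⟨hi, ?_⟩
        rw [GG_inl hi]
        congr 1; apply Fin.ext; simp; omega
      · rintro (h | ⟨hi, h⟩)
        · simp [MM] at h
        · simp only [Itf, Sum.elim_inl] at hi; rw [GG_inl hi] at h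
          have : (p:ℕ) - N = (q:ℕ) := by simpa using congrArg (fun z => Sum.elim (fun t : Fin (2*N) => (t:ℕ)) (fun t : Fin (2*N) => (t:ℕ)) z) h
          show (p:ℕ) = (q:ℕ) + N
          omega
  | inr p =>
    cases w with
    | inr q =>
      constructor
      · rintro (h | h)
        · exact Or.inl (by simp [MM, h])
        · refine Or.inl ?_; simp only [MM, Sum.map_inr, Sum.inr.injEq]
          rw [← h, h2.2.1]
      · rintro (h | ⟨hi, h⟩)
        · simp only [MM, Sum.map_inr, Sum.inr.injEq] at h; exact Or.inl h
        · simp only [Itf, Sum.elim_inr] at hi; rw [GG_inr hi] at h; exact absurd h (by simp)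
    | inl q =>
      constructor
      · intro h
        have h' : (q:ℕ) = (p:ℕ) + N := h
        have hi : (p : ℕ) < N := by have := q.isLt; omega
        refine Or.inr ⟨hi, ?_⟩
        rw [GG_inr hi]
        congr 1; apply Fin.ext; simp; omega
      · rintro (h | ⟨hi, h⟩)
        · simp [MM] at h
        · simp only [Itf, Sum.elim_inr] at hi; rw [GG_inr hi] at h
          have : (p:ℕ) + N = (q:ℕ) := by simpa using congrArg (fun z => Sum.elim (fun t : Fin (2*N) => (t:ℕ)) (fun t : Fin (2*N) => (t:ℕ)) z) h
          show (q:ℕ) = (p:ℕ) + N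
          omega

lemma step_MM (z) : layerStep N m1 m2 z (MM m1 m2 z) := by
  rw [step_iff h1 h2]; exact Or.inl rfl

lemma step_GG {z} (h : Itf z) : layerStep N m1 m2 z (GG z) := by
  rw [step_iff h1 h2]; exact Or.inr ⟨h, rfl⟩

lemma step_symm {z w} (h : layerStep N m1 m2 z w) : layerStep N m1 m2 w z := by
  rw [step_iff h1 h2] at h ⊢
  rcases h with h | ⟨hi, h⟩
  · exact Or.inl (by rw [← h, MM_invol h1 h2])
  · exact Or.inr ⟨by rw [← h]; exact Itf_GG hi, by rw [← h, GG_invol]⟩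

lemma conn_symm {z w} (h : Conn N m1 m2 z w) : Conn N m1 m2 w z := by
  induction h with
  | refl => exact Relation.ReflTransGen.refl
  | tail _ hstep ih => exact (Relation.ReflTransGen.single (step_symm h1 h2 hstep)).trans ih

end basics

end TL

namespace TL

variable {N : ℕ}

/-- one step of the deterministic strand walk -/
def nxt (m1 m2 : Fin (2*N) → Fin (2*N)) (z : Fin (2*N) ⊕ Fin (2*N)) : Fin (2*N) ⊕ Fin (2*N) :=
  GG (MM m1 m2 z)

def xk (m1 m2 : Fin (2*N) → Fin (2*N)) (x : Fin (2*N) ⊕ Fin (2*N)) (k : ℕ) :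
    Fin (2*N) ⊕ Fin (2*N) := (nxt m1 m2)^[k] x

def yk (m1 m2 : Fin (2*N) → Fin (2*N)) (x : Fin (2*N) ⊕ Fin (2*N)) (k : ℕ) :
    Fin (2*N) ⊕ Fin (2*N) := MM m1 m2 (xk m1 m2 x k)

def Pset (m1 m2 : Fin (2*N) → Fin (2*N)) (x : Fin (2*N) ⊕ Fin (2*N)) (t : ℕ) :
    Set (Fin (2*N) ⊕ Fin (2*N)) :=
  {z | ∃ k, k ≤ t ∧ (z = xk m1 m2 x k ∨ z = yk m1 m2 x k)}

section walk

variable {m1 m2 : Fin (2*N) → Fin (2*N)} (h1 : IsDiagram N m1) (h2 : IsDiagram N m2)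
  {x : Fin (2*N) ⊕ Fin (2*N)} (hx : ¬ Itf x) {t : ℕ}
  (ht : ¬ Itf (yk m1 m2 x t))
  (htmin : ∀ k, k < t → Itf (yk m1 m2 x k))

lemma xk_zero : xk m1 m2 x 0 = x := rfl

lemma xk_succ (k : ℕ) : xk m1 m2 x (k+1) = GG (yk m1 m2 x k) :=
  Function.iterate_succ_apply' (nxt m1 m2) k x

include h1 h2 in
lemma MM_yk (k : ℕ) : MM m1 m2 (yk m1 m2 x k) = xk m1 m2 x k :=
  MM_invol h1 h2 _

include h1 h2 hx in
lemma exists_stop : ∃ k, ¬ Itf (yk m1 m2 x k) := by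
  by_contra hcon
  push_neg at hcon
  have hinj : Function.Injective (nxt m1 m2 : _ → _) := by
    have hMM : Function.Involutive (MM m1 m2) := MM_invol h1 h2
    have hGG : Function.Involutive (GG (N := N)) := GG_invol
    exact hGG.injective.comp hMM.injective
  obtain ⟨i, j, hne, hij⟩ := Finite.exists_ne_map_eq_of_infinite
    (fun k : ℕ => (nxt m1 m2)^[k] x)
  wlog hlt : i < j generalizing i j
  · exact this j i hne.symm hij.symm (by omega)
  have hji : (nxt m1 m2)^[j] x = (nxt m1 m2)^[i] ((nxt m1 m2)^[j-i] x) := by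
    rw [← Function.iterate_add_apply]
    congr 1; omega
  have hper : (nxt m1 m2)^[j-i] x = x := (hinj.iterate i) (by rw [← hji]; exact hij.symm)
  have hp1 : j - i = (j - i - 1) + 1 := by omega
  have : Itf x := by
    rw [← hper, hp1, Function.iterate_succ_apply']
    exact Itf_GG (hcon _)
  exact hx this

include htmin in
lemma Itf_xk {k : ℕ} (hk1 : 1 ≤ k) (hk2 : k ≤ t) : Itf (xk m1 m2 x k) := by
  have : k = (k-1) + 1 := by omega
  rw [this, xk_succ]
  exact Itf_GG (htmin _ (by omega))

lemma mem_P_xk {k : ℕ} (hk : k ≤ t) : xk m1 m2 x k ∈ Pset m1 m2 x t :=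
  ⟨k, hk, Or.inl rfl⟩

lemma mem_P_yk {k : ℕ} (hk : k ≤ t) : yk m1 m2 x k ∈ Pset m1 m2 x t :=
  ⟨k, hk, Or.inr rfl⟩

lemma mem_P_x : x ∈ Pset m1 m2 x t := mem_P_xk (Nat.zero_le t)

include h1 h2 in
lemma P_MM {z} (hz : z ∈ Pset m1 m2 x t) : MM m1 m2 z ∈ Pset m1 m2 x t := by
  obtain ⟨k, hk, h | h⟩ := hz
  · exact ⟨k, hk, Or.inr (by rw [h]; rfl)⟩
  · exact ⟨k, hk, Or.inl (by rw [h]; exact MM_yk h1 h2 k)⟩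

include hx ht in
lemma P_GG {z} (hz : z ∈ Pset m1 m2 x t) (hi : Itf z) : GG z ∈ Pset m1 m2 x t := by
  obtain ⟨k, hk, h | h⟩ := hz
  · rcases Nat.eq_zero_or_pos k with hk0 | hk0
    · exact absurd (by rw [h, hk0] at hi; exact hi) hx
    · refine ⟨k-1, by omega, Or.inr ?_⟩
      rw [h, show xk m1 m2 x k = GG (yk m1 m2 x (k-1)) from by rw [← xk_succ]; congr 1; omega,
        GG_invol]
  · have hkt : k < t := by
      rcases Nat.lt_or_ge k t with h' | h'
      · exact h'
      · have : k = t := by omega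
        rw [h, this] at hi; exact absurd hi ht
    exact ⟨k+1, by omega, Or.inl (by rw [h, xk_succ])⟩

include h1 h2 hx ht in
lemma P_closed {z w} (hz : z ∈ Pset m1 m2 x t) (hs : layerStep N m1 m2 z w) :
    w ∈ Pset m1 m2 x t := by
  rw [step_iff h1 h2] at hs
  rcases hs with hs | ⟨hi, hs⟩
  · rw [← hs]; exact P_MM h1 h2 hz
  · rw [← hs]; exact P_GG hx ht hz hi

include h1 h2 htmin in
lemma conn_xk {k : ℕ} (hk : k ≤ t) : Conn N m1 m2 x (xk m1 m2 x k) := by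
  induction k with
  | zero => exact Relation.ReflTransGen.refl
  | succ n ih =>
    have h' : Conn N m1 m2 x (xk m1 m2 x n) := ih (by omega)
    have s1 : layerStep N m1 m2 (xk m1 m2 x n) (yk m1 m2 x n) := step_MM h1 h2 _
    have s2 : layerStep N m1 m2 (yk m1 m2 x n) (xk m1 m2 x (n+1)) := by
      rw [xk_succ]; exact step_GG h1 h2 (htmin n (by omega))
    exact (h'.tail s1).tail s2

include h1 h2 htmin in
lemma conn_of_mem_P {z} (hz : z ∈ Pset m1 m2 x t) : Conn N m1 m2 x z := by
  obtain ⟨k, hk, h | h⟩ := hz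
  · rw [h]; exact conn_xk h1 h2 htmin hk
  · rw [h]; exact (conn_xk h1 h2 htmin hk).tail (step_MM h1 h2 _)

include h1 h2 hx ht in
lemma mem_P_of_conn {z} (hz : Conn N m1 m2 x z) : z ∈ Pset m1 m2 x t := by
  induction hz with
  | refl => exact mem_P_x
  | tail _ hstep ih => exact P_closed h1 h2 hx ht ih hstep

include htmin in
lemma outer_of_P {z} (hz : z ∈ Pset m1 m2 x t) (ho : ¬ Itf z) :
    z = x ∨ z = yk m1 m2 x t := by
  obtain ⟨k, hk, h | h⟩ := hz
  · rcases Nat.eq_zero_or_pos k with hk0 | hk0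
    · rw [hk0] at h; exact Or.inl h
    · exact absurd (by rw [h]; exact Itf_xk htmin hk0 hk) ho
  · rcases Nat.lt_or_ge k t with h' | h'
    · exact absurd (by rw [h]; exact htmin k h') ho
    · have : k = t := by omega
      rw [this] at h; exact Or.inr h

include h1 h2 htmin in
lemma end_ne : yk m1 m2 x t ≠ x := by
  intro hE
  have C : ∀ k, k ≤ t → xk m1 m2 x (t - k) = yk m1 m2 x k := by
    intro k
    induction k with
    | zero =>
      intro _
      have : xk m1 m2 x t = MM m1 m2 x := by
        have := congrArg (MM m1 m2) hE
        rwa [MM_yk h1 h2] at this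
      simpa [yk, xk_zero] using this
    | succ n ih =>
      intro hn
      have ihh := ih (by omega)
      have e1 : xk m1 m2 x (t - n) = GG (yk m1 m2 x (t - (n+1))) := by
        have h' : t - n = (t - (n+1)) + 1 := by omega
        rw [h', xk_succ]
      have e2 : yk m1 m2 x (t - (n+1)) = GG (yk m1 m2 x n) := by
        have := congrArg GG (e1.symm.trans ihh)
        rwa [GG_invol] at this
      have e3 : yk m1 m2 x (t - (n+1)) = xk m1 m2 x (n+1) := by
        rw [e2, xk_succ]
      have := congrArg (MM m1 m2) e3
      rwa [MM_yk h1 h2] at this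
  rcases Nat.even_or_odd t with he | ho
  · obtain ⟨s, hs⟩ := he
    have := C s (by omega)
    have hts : t - s = s := by omega
    rw [hts] at this
    exact MM_ne h1 h2 _ this.symm
  · obtain ⟨s, hs⟩ := ho
    have hC := C s (by omega)
    have hts : t - s = s + 1 := by omega
    rw [hts, xk_succ] at hC
    have : ¬ Itf (yk m1 m2 x s) := by
      rw [← GG_eq_self_iff]; exact hC
    exact this (htmin s (by omega))

end walk

end TL

namespace TL

variable {N : ℕ}

lemma between_imp {m : Fin (2*N) → Fin (2*N)} (h : IsDiagram N m) {p w : Fin (2*N)}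
    (hwp : w ≠ p) (hwq : w ≠ m p)
    (hb : min (diagPos N p) (diagPos N (m p)) < diagPos N w ∧
      diagPos N w < max (diagPos N p) (diagPos N (m p))) :
    min (diagPos N p) (diagPos N (m p)) < diagPos N (m w) ∧
      diagPos N (m w) < max (diagPos N p) (diagPos N (m p)) := by
  by_contra hcon
  set q := m p with hq
  set w' := m w with hw'
  have hmw : m w = w' := rfl
  have hmp : m p = q := rfl
  have hmw2 : m w' = w := by rw [hw', h.2.1]
  have hmp2 : m q = p := by rw [hq, h.2.1]
  have hww' : w ≠ w' := fun hh => h.1 w (by rw [← hh] at hmw; exact hmw)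
  have hw'p : w' ≠ p := fun hh => hwq (by rw [← hmw2, hh])
  have hw'q : w' ≠ q := fun hh => hwp (by rw [← hmw2, hh]; exact hmp2)
  have hpq : p ≠ q := fun hh => h.1 p (hmp.trans hh.symm)
  have d1 : diagPos N w ≠ diagPos N p := fun hd => hwp (diagPos_inj hd)
  have d2 : diagPos N w ≠ diagPos N q := fun hd => hwq (diagPos_inj hd)
  have d3 : diagPos N w' ≠ diagPos N p := fun hd => hw'p (diagPos_inj hd)
  have d4 : diagPos N w' ≠ diagPos N q := fun hd => hw'q (diagPos_inj hd)
  rcases Nat.lt_or_ge (diagPos N p) (diagPos N q) with hPQ | hQP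
  · rcases Nat.lt_or_ge (diagPos N w') (diagPos N p) with hA | hA
    · exact h.2.2 w' w p q (by omega) (by omega) (by omega) hmw2 hmp
    · have hB : diagPos N q < diagPos N w' := by omega
      exact h.2.2 p q w w' (by omega) (by omega) hB hmp hmw
  · have hQP' : diagPos N q < diagPos N p := by omega
    rcases Nat.lt_or_ge (diagPos N w') (diagPos N q) with hA | hA
    · exact h.2.2 w' w q p hA (by omega) (by omega) hmw2 hmp2
    · have hB : diagPos N p < diagPos N w' := by omega
      exact h.2.2 q p w w' (by omega) (by omega) hB hmp2 hmw

lemma between_iff {m : Fin (2*N) → Fin (2*N)} (h : IsDiagram N m) {p w : Fin (2*N)}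
    (hwp : w ≠ p) (hwq : w ≠ m p) :
    (min (diagPos N p) (diagPos N (m p)) < diagPos N w ∧
      diagPos N w < max (diagPos N p) (diagPos N (m p))) ↔
    (min (diagPos N p) (diagPos N (m p)) < diagPos N (m w) ∧
      diagPos N (m w) < max (diagPos N p) (diagPos N (m p))) := by
  constructor
  · exact between_imp h hwp hwq
  · intro hb
    have hw'p : m w ≠ p := fun hh => hwq (by rw [← hh, h.2.1])
    have hw'q : m w ≠ m p := fun hh => hwp (by
      have := congrArg m hh; rwa [h.2.1, h.2.1] at this)
    have := between_imp h hw'p hw'q hb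
    rwa [h.2.1] at this

/-- layer position -/
def lpos : (Fin (2*N) ⊕ Fin (2*N)) → ℕ := Sum.elim (diagPos N) (diagPos N)

/-- indicator for the counting function -/
def ff (lft : Bool) (v : ℕ) (z : Fin (2*N) ⊕ Fin (2*N)) : ℕ :=
  if z.isLeft = lft ∧ lpos z < v then 1 else 0

/-- total count of strand points in a given layer below a given layer position,
with multiplicity -/
def SS (m1 m2 : Fin (2*N) → Fin (2*N)) (x : Fin (2*N) ⊕ Fin (2*N)) (t : ℕ)
    (lft : Bool) (v : ℕ) : ℕ :=
  ∑ k ∈ Finset.range (t+1), (ff lft v (xk m1 m2 x k) + ff lft v (yk m1 m2 x k))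

/-- the four-term crossing count is even -/
lemma cross_even {m : Fin (2*N) → Fin (2*N)} (h : IsDiagram N m) {p w : Fin (2*N)}
    (hwp : w ≠ p) (hwq : w ≠ m p) :
    Even ((if diagPos N w < diagPos N p then 1 else 0)
      + (if diagPos N w < diagPos N (m p) then 1 else 0)
      + ((if diagPos N (m w) < diagPos N p then 1 else 0)
      + (if diagPos N (m w) < diagPos N (m p) then 1 else 0))) := by
  have hiff := between_iff h hwp hwq
  have hw'p : m w ≠ p := fun hh => hwq (by rw [← hh, h.2.1])
  have hw'q : m w ≠ m p := fun hh => hwp (by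
    have := congrArg m hh; rwa [h.2.1, h.2.1] at this)
  have d1 : diagPos N w ≠ diagPos N p := fun hd => hwp (diagPos_inj hd)
  have d2 : diagPos N w ≠ diagPos N (m p) := fun hd => hwq (diagPos_inj hd)
  have d3 : diagPos N (m w) ≠ diagPos N p := fun hd => hw'p (diagPos_inj hd)
  have d4 : diagPos N (m w) ≠ diagPos N (m p) := fun hd => hw'q (diagPos_inj hd)
  rw [Nat.even_iff]
  split_ifs <;> omega

end TL

namespace TL

variable {N : ℕ}

section count

variable {m1 m2 : Fin (2*N) → Fin (2*N)} (h1 : IsDiagram N m1) (h2 : IsDiagram N m2)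
  {x : Fin (2*N) ⊕ Fin (2*N)} (hx : ¬ Itf x) {t : ℕ}
  (ht : ¬ Itf (yk m1 m2 x t))
  (htmin : ∀ k, k < t → Itf (yk m1 m2 x k))

lemma sum_decomp (g : (Fin (2*N) ⊕ Fin (2*N)) → ℕ) :
    ∑ k ∈ Finset.range (t+1), (g (xk m1 m2 x k) + g (yk m1 m2 x k)) =
      g x + g (yk m1 m2 x t) +
        ∑ i ∈ Finset.range t, (g (yk m1 m2 x i) + g (xk m1 m2 x (i+1))) := by
  rw [Finset.sum_add_distrib, Finset.sum_range_succ' (fun k => g (xk m1 m2 x k)) t,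
    Finset.sum_range_succ (fun k => g (yk m1 m2 x k)) t, Finset.sum_add_distrib]
  have hx0 : xk m1 m2 x 0 = x := rfl
  rw [hx0]
  omega

include htmin in
lemma isLeft_xk_succ {k : ℕ} (hk : k < t) :
    (xk m1 m2 x (k+1)).isLeft = !(xk m1 m2 x k).isLeft := by
  rw [xk_succ, isLeft_GG (htmin k hk), yk, isLeft_MM]

include htmin in
lemma parity_tot :
    ((if x.isLeft = true then 1 else 0) + (if (yk m1 m2 x t).isLeft = true then 1 else 0) + t)
      % 2 = 0 := by
  have H : ∀ k, k ≤ t →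
      ((if (xk m1 m2 x k).isLeft = true then 1 else 0) + k) % 2
        = (if x.isLeft = true then 1 else 0) % 2 := by
    intro k
    induction k with
    | zero => intro _; rfl
    | succ n ih =>
      intro hn
      have hih := ih (by omega)
      rw [isLeft_xk_succ htmin (by omega)]
      cases hL : (xk m1 m2 x n).isLeft <;> rw [hL] at hih <;> simp at hih ⊢ <;> omega
  have hyt : (yk m1 m2 x t).isLeft = (xk m1 m2 x t).isLeft := by rw [yk, isLeft_MM]
  have := H t (le_refl t)
  rw [hyt]
  split_ifs at * <;> omega

include htmin in
lemma glue_pair {i : ℕ} (hi : i < t) :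
    ∃ (jl jr : Fin (2*N)), (jl : ℕ) = (jr : ℕ) + N ∧ (jr : ℕ) < N ∧
      Sum.inl jl ∈ Pset m1 m2 x t ∧ Sum.inr jr ∈ Pset m1 m2 x t ∧
      diagPos N jl = 2*N - 1 - (jr : ℕ) ∧
      (∀ v, ff true v (yk m1 m2 x i) + ff true v (xk m1 m2 x (i+1))
          = if diagPos N jl < v then 1 else 0) ∧
      (∀ v, ff false v (yk m1 m2 x i) + ff false v (xk m1 m2 x (i+1))
          = if (jr : ℕ) < v then 1 else 0) := by
  have hItf := htmin i hi
  have hx1 : xk m1 m2 x (i+1) = GG (yk m1 m2 x i) := xk_succ i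
  have hmyk : yk m1 m2 x i ∈ Pset m1 m2 x t := mem_P_yk (by omega)
  have hmxk : xk m1 m2 x (i+1) ∈ Pset m1 m2 x t := mem_P_xk (by omega)
  rcases hyk : yk m1 m2 x i with p | p
  · rw [hyk] at hItf hx1 hmyk
    simp only [Itf, Sum.elim_inl] at hItf
    have hp2 := p.isLt
    refine ⟨p, ⟨(p:ℕ) - N, by omega⟩, by simp; omega, by simp; omega, hmyk, ?_, ?_, ?_, ?_⟩
    · rw [hx1, GG_inl hItf] at hmxk; exact hmxk
    · unfold diagPos; split <;> simp_all <;> omega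
    · intro v
      rw [hx1, GG_inl hItf]
      simp [ff, lpos]
    · intro v
      rw [hx1, GG_inl hItf]
      simp only [ff, lpos, Sum.isLeft_inl, Sum.isLeft_inr, Bool.false_eq_true, false_and,
        if_false, Sum.elim_inr, Sum.elim_inl, true_and, if_true]
      have : diagPos N (⟨(p:ℕ) - N, by omega⟩ : Fin (2*N)) = (p:ℕ) - N := by
        unfold diagPos; simp; omega
      rw [this]
      simp
  · rw [hyk] at hItf hx1 hmyk
    simp only [Itf, Sum.elim_inr] at hItf
    have hp2 := p.isLt
    refine ⟨⟨(p:ℕ) + N, by omega⟩, p, by simp, hItf, ?_, hmyk, ?_, ?_, ?_⟩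
    · rw [hx1, GG_inr hItf] at hmxk; exact hmxk
    · unfold diagPos; split <;> simp_all <;> omega
    · intro v
      rw [hx1, GG_inr hItf]
      simp [ff, lpos]
    · intro v
      rw [hx1, GG_inr hItf]
      simp only [ff, lpos, Sum.isLeft_inl, Sum.isLeft_inr, Bool.false_eq_true, false_and,
        if_false, Sum.elim_inr, Sum.elim_inl, true_and, if_true]
      have : diagPos N p = (p : ℕ) := by unfold diagPos; simp [hItf]
      rw [this]
      simp

lemma outer_ff {z : Fin (2*N) ⊕ Fin (2*N)} (hz : ¬ Itf z) {v j : ℕ} (hv : N ≤ v) (hj : j ≤ N) :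
    ff true v z + ff false j z = if z.isLeft = true then 1 else 0 := by
  rcases z with p | p
  · simp only [Itf, Sum.elim_inl, not_le] at hz
    have : diagPos N p = (p : ℕ) := by unfold diagPos; simp [hz]
    simp [ff, lpos, this]
    omega
  · simp only [Itf, Sum.elim_inr, not_lt] at hz
    have := diagPos_ge_N p hz
    simp [ff, lpos]
    omega

end count

end TL

namespace TL

variable {N : ℕ}

/-- membership side function -/
def Inside (m1 m2 : Fin (2*N) → Fin (2*N)) (x : Fin (2*N) ⊕ Fin (2*N)) (t : ℕ) :
    (Fin (2*N) ⊕ Fin (2*N)) → Prop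
  | .inl p => if (p:ℕ) < N then Odd (SS m1 m2 x t true (diagPos N p))
      else Odd (SS m1 m2 x t false ((p:ℕ) - N))
  | .inr p => Odd (SS m1 m2 x t false (diagPos N p))

lemma outer_not_Itf (c : Fin (2*N)) : ¬ Itf (outer N c) := by
  unfold outer
  by_cases h : (c:ℕ) < N <;> simp [h, Itf] <;> omega

lemma outer_isLeft (c : Fin (2*N)) :
    (if (outer N c).isLeft = true then 1 else 0) = if (c:ℕ) < N then 1 else 0 := by
  unfold outer
  by_cases h : (c:ℕ) < N <;> simp [h]

lemma outer_inj {c d : Fin (2*N)} (h : outer N c = outer N d) : c = d := by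
  unfold outer at h
  by_cases hc : (c:ℕ) < N <;> by_cases hd : (d:ℕ) < N <;> simp [hc, hd] at h <;>
    first | exact h | exact absurd h (by simp)

lemma ff_true_outer {c : Fin (2*N)} {v : ℕ} (hv : v ≤ N) :
    ff true v (outer N c) = if diagPos N c < v then 1 else 0 := by
  unfold outer
  by_cases h : (c:ℕ) < N
  · simp [h, ff, lpos]
  · have := diagPos_ge_N c (by omega)
    simp [h, ff, lpos]
    omega

lemma ff_false_outer {c : Fin (2*N)} {v : ℕ} (hv : N ≤ v) :
    ff false v (outer N c) + (if (c:ℕ) < N then 1 else 0) = if diagPos N c < v then 1 else 0 := by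
  unfold outer
  by_cases h : (c:ℕ) < N
  · have hd : diagPos N c = (c:ℕ) := by unfold diagPos; simp [h]
    simp [h, ff, lpos, hd]
    omega
  · simp [h, ff, lpos]

section count2

variable {m1 m2 : Fin (2*N) → Fin (2*N)} (h1 : IsDiagram N m1) (h2 : IsDiagram N m2)
  {x : Fin (2*N) ⊕ Fin (2*N)} (hx : ¬ Itf x) {t : ℕ}
  (ht : ¬ Itf (yk m1 m2 x t))
  (htmin : ∀ k, k < t → Itf (yk m1 m2 x k))

include hx ht htmin in
lemma consistency {p : Fin (2*N)} (hp : N ≤ (p:ℕ)) (hnp : Sum.inl p ∉ Pset m1 m2 x t) :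
    (Odd (SS m1 m2 x t true (diagPos N p)) ↔ Odd (SS m1 m2 x t false ((p:ℕ) - N))) := by
  have hp2 := p.isLt
  set v := diagPos N p with hvdef
  set j := (p:ℕ) - N with hjdef
  have hv : v = 2*N - 1 - j := by rw [hvdef]; unfold diagPos; split <;> omega
  have hvN : N ≤ v := diagPos_ge_N p hp
  have hjN : j < N := by omega
  suffices hE : Even (SS m1 m2 x t true v + SS m1 m2 x t false j) by
    rw [Nat.odd_iff, Nat.odd_iff]
    rw [Nat.even_iff] at hE
    omega
  have e1 : SS m1 m2 x t true v = ff true v x + ff true v (yk m1 m2 x t) +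
      ∑ i ∈ Finset.range t, (ff true v (yk m1 m2 x i) + ff true v (xk m1 m2 x (i+1))) :=
    sum_decomp (ff true v)
  have e2 : SS m1 m2 x t false j = ff false j x + ff false j (yk m1 m2 x t) +
      ∑ i ∈ Finset.range t, (ff false j (yk m1 m2 x i) + ff false j (xk m1 m2 x (i+1))) :=
    sum_decomp (ff false j)
  have hpair : ∀ i ∈ Finset.range t,
      ((ff true v (yk m1 m2 x i) + ff true v (xk m1 m2 x (i+1))) +
       (ff false j (yk m1 m2 x i) + ff false j (xk m1 m2 x (i+1)))) = 1 := by
    intro i hi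
    rw [Finset.mem_range] at hi
    obtain ⟨jl, jr, hjl, hjr, hml, _, hdl, hfT, hfF⟩ := glue_pair htmin hi
    rw [hfT v, hfF j, hdl]
    have hne : (jr:ℕ) ≠ j := by
      intro hh
      apply hnp
      have : jl = p := by apply Fin.ext; omega
      rw [← this]
      exact hml
    split_ifs <;> omega
  have hsum : ∑ i ∈ Finset.range t, (ff true v (yk m1 m2 x i) + ff true v (xk m1 m2 x (i+1)))
      + ∑ i ∈ Finset.range t, (ff false j (yk m1 m2 x i) + ff false j (xk m1 m2 x (i+1))) = t := by
    rw [← Finset.sum_add_distrib, Finset.sum_congr rfl hpair, Finset.sum_const,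
      Finset.card_range, smul_eq_mul, mul_one]
  have hox := outer_ff hx (v := v) (j := j) hvN (by omega)
  have hoy := outer_ff ht (v := v) (j := j) hvN (by omega)
  have hpar := parity_tot htmin
  rw [Nat.even_iff]
  rw [e1, e2]
  omega

include h1 h2 in
lemma mstep1 {p : Fin (2*N)} (hnp : Sum.inl p ∉ Pset m1 m2 x t)
    (hnq : Sum.inl (m1 p) ∉ Pset m1 m2 x t) :
    (Odd (SS m1 m2 x t true (diagPos N p)) ↔ Odd (SS m1 m2 x t true (diagPos N (m1 p)))) := by
  suffices hE : Even (SS m1 m2 x t true (diagPos N p) + SS m1 m2 x t true (diagPos N (m1 p))) by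
    rw [Nat.odd_iff, Nat.odd_iff]
    rw [Nat.even_iff] at hE
    omega
  unfold SS
  rw [← Finset.sum_add_distrib]
  apply Finset.even_sum
  intro k hk
  rw [Finset.mem_range] at hk
  rcases hxkk : xk m1 m2 x k with w | w
  · have hykk : yk m1 m2 x k = Sum.inl (m1 w) := by rw [yk, hxkk]; rfl
    have hmem1 : Sum.inl w ∈ Pset m1 m2 x t := by rw [← hxkk]; exact mem_P_xk (by omega)
    have hmem2 : Sum.inl (m1 w) ∈ Pset m1 m2 x t := by rw [← hykk]; exact mem_P_yk (by omega)
    have hwp : w ≠ p := fun hh => hnp (hh ▸ hmem1)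
    have hwq : w ≠ m1 p := fun hh => hnq (hh ▸ hmem1)
    have hffl : ∀ (v : ℕ) (u : Fin (2*N)), ff true v (Sum.inl u) = if diagPos N u < v then 1 else 0 := by
      intro v u; simp [ff, lpos]
    rw [hykk, hffl, hffl, hffl, hffl]
    have hce := cross_even h1 hwp hwq
    rw [Nat.even_iff] at hce ⊢
    omega
  · have hykk : yk m1 m2 x k = Sum.inr (m2 w) := by rw [yk, hxkk]; rfl
    rw [hykk]
    simp [ff]

include h1 h2 in
lemma mstep2 {p : Fin (2*N)} (hnp : Sum.inr p ∉ Pset m1 m2 x t)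
    (hnq : Sum.inr (m2 p) ∉ Pset m1 m2 x t) :
    (Odd (SS m1 m2 x t false (diagPos N p)) ↔ Odd (SS m1 m2 x t false (diagPos N (m2 p)))) := by
  suffices hE : Even (SS m1 m2 x t false (diagPos N p) + SS m1 m2 x t false (diagPos N (m2 p))) by
    rw [Nat.odd_iff, Nat.odd_iff]
    rw [Nat.even_iff] at hE
    omega
  unfold SS
  rw [← Finset.sum_add_distrib]
  apply Finset.even_sum
  intro k hk
  rw [Finset.mem_range] at hk
  rcases hxkk : xk m1 m2 x k with w | w
  · have hykk : yk m1 m2 x k = Sum.inl (m1 w) := by rw [yk, hxkk]; rfl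
    rw [hykk]
    simp [ff]
  · have hykk : yk m1 m2 x k = Sum.inr (m2 w) := by rw [yk, hxkk]; rfl
    have hmem1 : Sum.inr w ∈ Pset m1 m2 x t := by rw [← hxkk]; exact mem_P_xk (by omega)
    have hwp : w ≠ p := fun hh => hnp (hh ▸ hmem1)
    have hwq : w ≠ m2 p := fun hh => hnq (hh ▸ hmem1)
    have hffl : ∀ (v : ℕ) (u : Fin (2*N)), ff false v (Sum.inr u) = if diagPos N u < v then 1 else 0 := by
      intro v u; simp [ff, lpos]
    rw [hykk, hffl, hffl, hffl, hffl]
    have hce := cross_even h2 hwp hwq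
    rw [Nat.even_iff] at hce ⊢
    omega

include hx ht htmin in
lemma inside_inl {p : Fin (2*N)} (hnp : Sum.inl p ∉ Pset m1 m2 x t) :
    (Inside m1 m2 x t (Sum.inl p) ↔ Odd (SS m1 m2 x t true (diagPos N p))) := by
  by_cases h : (p:ℕ) < N
  · simp only [Inside, if_pos h]
  · simp only [Inside, if_neg h]
    exact (consistency hx ht htmin (by omega) hnp).symm

include h1 h2 hx ht htmin in
lemma step_inside {z w : Fin (2*N) ⊕ Fin (2*N)} (hz : z ∉ Pset m1 m2 x t)
    (hw : w ∉ Pset m1 m2 x t) (hs : layerStep N m1 m2 z w) :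
    (Inside m1 m2 x t z ↔ Inside m1 m2 x t w) := by
  rw [step_iff h1 h2] at hs
  rcases hs with hs | ⟨hi, hs⟩
  · rcases z with p | p
    · have hwv : w = Sum.inl (m1 p) := by rw [← hs]; rfl
      subst hwv
      rw [inside_inl hx ht htmin hz, inside_inl hx ht htmin hw]
      exact mstep1 h1 h2 hz hw
    · have hwv : w = Sum.inr (m2 p) := by rw [← hs]; rfl
      subst hwv
      simp only [Inside]
      exact mstep2 h1 h2 hz hw
  · rcases z with p | p
    · simp only [Itf, Sum.elim_inl] at hi
      have hpl0 := p.isLt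
      have hwv : w = Sum.inr (⟨(p:ℕ) - N, by omega⟩ : Fin (2*N)) := by
        rw [← hs, GG_inl hi]
      subst hwv
      simp only [Inside, if_neg (by omega : ¬ ((p:ℕ) < N))]
      have : diagPos N (⟨(p:ℕ) - N, by omega⟩ : Fin (2*N)) = (p:ℕ) - N := by
        have hpl := p.isLt
        unfold diagPos
        rw [if_pos (show ((⟨(p:ℕ) - N, by omega⟩ : Fin (2*N)) : ℕ) < N by show (p:ℕ) - N < N; omega)]
      rw [this]
    · simp only [Itf, Sum.elim_inr] at hi
      have hpl0 := p.isLt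
      have hwv : w = Sum.inl (⟨(p:ℕ) + N, by omega⟩ : Fin (2*N)) := by
        rw [← hs, GG_inr hi]
      subst hwv
      have hpl := p.isLt
      simp only [Inside, if_neg (show ¬ (((⟨(p:ℕ) + N, by omega⟩ : Fin (2*N)) : ℕ) < N) by show ¬ ((p:ℕ) + N < N); omega)]
      have e1 : ((⟨(p:ℕ) + N, by omega⟩ : Fin (2*N)) : ℕ) - N = (p:ℕ) := by
        show (p:ℕ) + N - N = (p:ℕ); omega
      have e2 : diagPos N p = (p:ℕ) := by unfold diagPos; simp [hi]
      rw [e1, e2]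

end count2

end TL

namespace TL

variable {N : ℕ}

section count3

variable {m1 m2 : Fin (2*N) → Fin (2*N)} (h1 : IsDiagram N m1) (h2 : IsDiagram N m2)
  {x : Fin (2*N) ⊕ Fin (2*N)} (hx : ¬ Itf x) {t : ℕ}
  (ht : ¬ Itf (yk m1 m2 x t))
  (htmin : ∀ k, k < t → Itf (yk m1 m2 x k))

include hx ht htmin in
lemma inside_outer {a b u : Fin (2*N)} (hxa : x = outer N a)
    (hyb : yk m1 m2 x t = outer N b) (hu : outer N u ∉ Pset m1 m2 x t) :
    (Inside m1 m2 x t (outer N u) ↔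
      Odd ((if diagPos N a < diagPos N u then 1 else 0)
        + (if diagPos N b < diagPos N u then 1 else 0))) := by
  subst hxa
  by_cases hub : (u:ℕ) < N
  · have hou : outer N u = Sum.inl u := by unfold outer; rw [if_pos hub]
    have hdu : diagPos N u = (u:ℕ) := by unfold diagPos; rw [if_pos hub]
    rw [hou, inside_inl hx ht htmin (hou ▸ hu)]
    have e1 : SS m1 m2 (outer N a) t true (diagPos N u)
        = ff true (diagPos N u) (outer N a) + ff true (diagPos N u) (yk m1 m2 (outer N a) t)
        + ∑ i ∈ Finset.range t, (ff true (diagPos N u) (yk m1 m2 (outer N a) i)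
            + ff true (diagPos N u) (xk m1 m2 (outer N a) (i+1))) := sum_decomp _
    have e2 : ∑ i ∈ Finset.range t, (ff true (diagPos N u) (yk m1 m2 (outer N a) i)
            + ff true (diagPos N u) (xk m1 m2 (outer N a) (i+1))) = 0 := by
      apply Finset.sum_eq_zero
      intro i hi
      rw [Finset.mem_range] at hi
      obtain ⟨jl, jr, hjl, hjr, _, _, hdl, hfT, _⟩ := glue_pair htmin hi
      rw [hfT, if_neg (by omega)]
    rw [e1, e2, hyb, ff_true_outer (by omega), ff_true_outer (by omega), add_zero]
  · have hou : outer N u = Sum.inr u := by unfold outer; rw [if_neg hub]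
    have hvN : N ≤ diagPos N u := diagPos_ge_N u (by omega)
    rw [hou]
    have hIns : Inside m1 m2 (outer N a) t (Sum.inr u)
        = Odd (SS m1 m2 (outer N a) t false (diagPos N u)) := rfl
    rw [hIns]
    have e1 : SS m1 m2 (outer N a) t false (diagPos N u)
        = ff false (diagPos N u) (outer N a) + ff false (diagPos N u) (yk m1 m2 (outer N a) t)
        + ∑ i ∈ Finset.range t, (ff false (diagPos N u) (yk m1 m2 (outer N a) i)
            + ff false (diagPos N u) (xk m1 m2 (outer N a) (i+1))) := sum_decomp _
    have e2 : ∑ i ∈ Finset.range t, (ff false (diagPos N u) (yk m1 m2 (outer N a) i)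
            + ff false (diagPos N u) (xk m1 m2 (outer N a) (i+1))) = t := by
      rw [Finset.sum_congr rfl (fun i hi => ?_), Finset.sum_const, Finset.card_range,
        smul_eq_mul, mul_one]
      rw [Finset.mem_range] at hi
      obtain ⟨jl, jr, hjl, hjr, _, _, hdl, _, hfF⟩ := glue_pair htmin hi
      rw [hfF, if_pos (by omega)]
    have hfa := ff_false_outer (c := a) hvN
    have hfb := ff_false_outer (c := b) hvN
    have hpar := parity_tot htmin
    rw [hyb, outer_isLeft, outer_isLeft] at hpar
    rw [e1, e2, hyb, Nat.odd_iff, Nat.odd_iff]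
    omega

end count3

section main

variable {m1 m2 : Fin (2*N) → Fin (2*N)} (h1 : IsDiagram N m1) (h2 : IsDiagram N m2)

/-- number of steps of the strand走 starting at outer point `a` -/
noncomputable def tOf (a : Fin (2*N)) : ℕ :=
  Nat.find (exists_stop h1 h2 (outer_not_Itf a))

/-- the other end of the strand starting at outer point `a` -/
noncomputable def endPt (a : Fin (2*N)) : Fin (2*N) ⊕ Fin (2*N) :=
  yk m1 m2 (outer N a) (tOf h1 h2 a)

def toF : (Fin (2*N) ⊕ Fin (2*N)) → Fin (2*N) := Sum.elim id id

/-- the composite matching -/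
noncomputable def m3f (a : Fin (2*N)) : Fin (2*N) := toF (endPt h1 h2 a)

lemma tOf_spec (a : Fin (2*N)) : ¬ Itf (yk m1 m2 (outer N a) (tOf h1 h2 a)) :=
  Nat.find_spec (exists_stop h1 h2 (outer_not_Itf a))

lemma tOf_min (a : Fin (2*N)) : ∀ k, k < tOf h1 h2 a → Itf (yk m1 m2 (outer N a) k) :=
  fun k hk => not_not.1 (Nat.find_min (exists_stop h1 h2 (outer_not_Itf a)) hk)

lemma outer_toF {z : Fin (2*N) ⊕ Fin (2*N)} (hz : ¬ Itf z) : outer N (toF z) = z := by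
  rcases z with p | p
  · simp only [Itf, Sum.elim_inl, not_le] at hz
    unfold outer toF
    simp [hz]
  · simp only [Itf, Sum.elim_inr, not_lt] at hz
    unfold outer toF
    simp [not_lt.mpr hz]

lemma outer_m3 (a : Fin (2*N)) : outer N (m3f h1 h2 a) = endPt h1 h2 a :=
  outer_toF (tOf_spec h1 h2 a)

lemma conn_endPt (a : Fin (2*N)) : Conn N m1 m2 (outer N a) (endPt h1 h2 a) :=
  conn_of_mem_P h1 h2 (tOf_min h1 h2 a) (mem_P_yk (le_refl _))

lemma endPt_eq_of_conn {a : Fin (2*N)} {z : Fin (2*N) ⊕ Fin (2*N)}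
    (hz : Conn N m1 m2 (outer N a) z) (hzo : ¬ Itf z) (hne : z ≠ outer N a) :
    z = endPt h1 h2 a := by
  have hmem := mem_P_of_conn h1 h2 (outer_not_Itf a) (tOf_spec h1 h2 a) hz
  rcases outer_of_P (tOf_min h1 h2 a) hmem hzo with h | h
  · exact absurd h hne
  · exact h

lemma endPt_ne (a : Fin (2*N)) : endPt h1 h2 a ≠ outer N a :=
  end_ne h1 h2 (tOf_min h1 h2 a)

lemma m3_ne (a : Fin (2*N)) : m3f h1 h2 a ≠ a := by
  intro h
  apply endPt_ne h1 h2 a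
  rw [← outer_m3 h1 h2, h]

lemma m3_invol (a : Fin (2*N)) : m3f h1 h2 (m3f h1 h2 a) = a := by
  have hc : Conn N m1 m2 (outer N (m3f h1 h2 a)) (outer N a) := by
    rw [outer_m3 h1 h2]
    exact conn_symm h1 h2 (conn_endPt h1 h2 a)
  have hne : outer N a ≠ outer N (m3f h1 h2 a) := by
    intro h
    exact m3_ne h1 h2 a (outer_inj h).symm
  have := endPt_eq_of_conn h1 h2 hc (outer_not_Itf a) hne
  rw [← outer_m3 h1 h2] at this
  exact (outer_inj this).symm

lemma m3_conn (a : Fin (2*N)) : Conn N m1 m2 (outer N a) (outer N (m3f h1 h2 a)) := by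
  rw [outer_m3 h1 h2]
  exact conn_endPt h1 h2 a

lemma m3_of_conn {a b : Fin (2*N)} (hne : b ≠ a)
    (hc : Conn N m1 m2 (outer N a) (outer N b)) : m3f h1 h2 a = b := by
  have hne' : outer N b ≠ outer N a := fun h => hne (outer_inj h)
  have := endPt_eq_of_conn h1 h2 hc (outer_not_Itf b) hne'
  rw [← outer_m3 h1 h2] at this
  exact (outer_inj this).symm

lemma m3_noncross : ∀ a b c d : Fin (2*N),
    diagPos N a < diagPos N c → diagPos N c < diagPos N b → diagPos N b < diagPos N d →
    m3f h1 h2 a = b → m3f h1 h2 c = d → False := by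
  intro a b c d hac hcb hbd hab hcd
  have hx := outer_not_Itf (N := N) a
  have ht := tOf_spec h1 h2 a
  have htmin := tOf_min h1 h2 a
  have hyb : yk m1 m2 (outer N a) (tOf h1 h2 a) = outer N b := by
    rw [← hab]
    exact (outer_m3 h1 h2 a).symm
  have hnc : outer N c ∉ Pset m1 m2 (outer N a) (tOf h1 h2 a) := by
    intro hmem
    rcases outer_of_P htmin hmem (outer_not_Itf c) with h | h
    · have := outer_inj h; subst this; omega
    · rw [hyb] at h
      have := outer_inj h; subst this; omega
  have hnd : outer N d ∉ Pset m1 m2 (outer N a) (tOf h1 h2 a) := by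
    intro hmem
    rcases outer_of_P htmin hmem (outer_not_Itf d) with h | h
    · have := outer_inj h; subst this; omega
    · rw [hyb] at h
      have := outer_inj h; subst this; omega
  have hconn : Conn N m1 m2 (outer N c) (outer N d) := by
    rw [← hcd]
    exact m3_conn h1 h2 c
  have hmain : ∀ z, Conn N m1 m2 (outer N c) z →
      z ∉ Pset m1 m2 (outer N a) (tOf h1 h2 a) ∧
      (Inside m1 m2 (outer N a) (tOf h1 h2 a) z ↔
        Inside m1 m2 (outer N a) (tOf h1 h2 a) (outer N c)) := by
    intro z hz
    induction hz with
    | refl => exact ⟨hnc, Iff.rfl⟩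
    | @tail zb zc hcz hstep ih =>
      have hw : zc ∉ Pset m1 m2 (outer N a) (tOf h1 h2 a) := by
        intro hmem
        have hxz : Conn N m1 m2 (outer N a) zc := conn_of_mem_P h1 h2 htmin hmem
        have : Conn N m1 m2 (outer N a) (outer N c) :=
          hxz.trans (conn_symm h1 h2 (hcz.tail hstep))
        exact hnc (mem_P_of_conn h1 h2 hx ht this)
      exact ⟨hw, ((step_inside h1 h2 hx ht htmin ih.1 hw hstep).symm).trans ih.2⟩
  have hIc : Inside m1 m2 (outer N a) (tOf h1 h2 a) (outer N c) := by
    rw [inside_outer hx ht htmin rfl hyb hnc, if_pos hac, if_neg (by omega)]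
    norm_num
  have hId : ¬ Inside m1 m2 (outer N a) (tOf h1 h2 a) (outer N d) := by
    rw [inside_outer hx ht htmin rfl hyb hnd, if_pos (by omega), if_pos hbd]
    norm_num
  exact hId ((hmain (outer N d) hconn).2.mpr hIc)

end main

end TL


/-- Composing (stacking) two planar diagrams on `N` strands yields a planar diagram:
there is a noncrossing perfect matching `m3` of the outer `2*N` boundary points which
matches `a` to `b` (for `a ≠ b`) exactly when a path through the stack of `m1` and
`m2` connects them. -/
theorem stmt_11 (N : ℕ) (m1 m2 : Fin (2*N) → Fin (2*N))
    (h1 : IsDiagram N m1) (h2 : IsDiagram N m2) :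
    ∃ m3 : Fin (2*N) → Fin (2*N), IsDiagram N m3 ∧
      ∀ a b : Fin (2*N), a ≠ b →
        (m3 a = b ↔ Conn N m1 m2 (outer N a) (outer N b)) := by
  refine ⟨TL.m3f h1 h2, ⟨TL.m3_ne h1 h2, TL.m3_invol h1 h2, TL.m3_noncross h1 h2⟩, ?_⟩
  intro a b hne
  constructor
  · intro h
    rw [← h]
    exact TL.m3_conn h1 h2 a
  · intro h
    exact TL.m3_of_conn h1 h2 (Ne.symm hne) h
end

section
/- The number of planar diagrams on N strands with exactly k through-strands (bottom-to-top connections), where k ≡ N mod 2, is (binomial(N, (N-k)/2) - binomial(N, (N-k)/2 - 1))², and summing over k recovers the Catalan number C_N. -/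
/-- The number of through-strands (bottom-to-top connections) of a planar diagram. -/
def throughCount (N : ℕ) (m : Fin (2*N) → Fin (2*N)) : ℕ :=
  (Finset.univ.filter
    (fun a : Fin (2*N) => (a : ℕ) < N ∧ N ≤ ((m a : Fin (2*N)) : ℕ))).card



open Finset

/-- A noncrossing partial matching of `n` points on a line, as an involution whose
fixed points are the unmatched points; unmatched points must be uncovered, and there
are `k` of them. -/
def IsHalf (n k : ℕ) (f : Fin n → Fin n) : Prop :=
  (∀ a, f (f a) = a) ∧
  (∀ a c : Fin n, (a:ℕ) < (c:ℕ) → (c:ℕ) < (f a : ℕ) → ((f a : ℕ)) < (f c : ℕ) → False) ∧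
  (∀ a c : Fin n, f a = a → (c:ℕ) < (a:ℕ) → (a:ℕ) < (f c : ℕ) → False) ∧
  (Finset.univ.filter (fun a => f a = a)).card = k

namespace IsHalfAux

variable {n k : ℕ}

def res (f : Fin (n+1) → Fin (n+1)) : Fin n → Fin n :=
  fun i => if h : (f i.castSucc : ℕ) < n then ⟨(f i.castSucc : ℕ), h⟩ else i

def ext0 (g : Fin n → Fin n) : Fin (n+1) → Fin (n+1) :=
  fun a => if h : (a:ℕ) < n then (g ⟨(a:ℕ), h⟩).castSucc else a

def ext1 (g : Fin n → Fin n) (c : Fin n) : Fin (n+1) → Fin (n+1) :=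
  fun a => if (a : ℕ) = (c:ℕ) then Fin.last n
    else if h : (a:ℕ) < n then (g ⟨(a:ℕ), h⟩).castSucc else c.castSucc

variable {f : Fin (n+1) → Fin (n+1)} {g : Fin n → Fin n}

lemma res_arc (hinv : ∀ a, f (f a) = a) {i j : Fin n} (hne : res f i ≠ i)
    (hij : res f i = j) : f i.castSucc = j.castSucc := by
  by_cases h : (f i.castSucc : ℕ) < n
  · have hv : (j : ℕ) = (f i.castSucc : ℕ) := by
      rw [← hij]; unfold res; rw [dif_pos h]
    ext; simp [hv]
  · exfalso; apply hne; unfold res; rw [dif_neg h]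

lemma res_fixed_iff (hinv : ∀ a, f (f a) = a) {i : Fin n} :
    res f i = i ↔ (f i.castSucc = i.castSucc ∨ i.castSucc = f (Fin.last n)) := by
  constructor
  · intro h
    by_cases hl : (f i.castSucc : ℕ) < n
    · left
      have hv : (res f i : ℕ) = (f i.castSucc : ℕ) := by unfold res; rw [dif_pos hl]
      ext; rw [← hv, h]; simp
    · right
      have hval : (f i.castSucc : ℕ) = n := by have := (f i.castSucc).isLt; omega
      have hfl : f i.castSucc = Fin.last n := by ext; simpa
      rw [← hinv i.castSucc, hfl]
  · rintro (h | h)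
    · have hl : (f i.castSucc : ℕ) < n := by rw [h]; simpa using i.isLt
      unfold res; rw [dif_pos hl]; ext; simp [h]
    · have hfl : f i.castSucc = Fin.last n := by rw [h, hinv]
      unfold res; rw [dif_neg (by rw [hfl]; simp)]

lemma res_isHalf (hf : IsHalf (n+1) k f) (K : ℕ)
    (hK : (if f (Fin.last n) = Fin.last n then k = K + 1 else k + 1 = K)) :
    IsHalf n K (res f) := by
  obtain ⟨hinv, hnc, hunc, hcard⟩ := hf
  refine ⟨?_, ?_, ?_, ?_⟩
  · -- involution
    intro i
    by_cases h : res f i = i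
    · rw [h, h]
    · set j := res f i with hj
      have harc : f i.castSucc = j.castSucc := res_arc hinv h hj.symm
      have hji : f j.castSucc = i.castSucc := by rw [← harc, hinv]
      unfold res
      rw [dif_pos (by rw [hji]; simpa using i.isLt)]
      ext
      show (f j.castSucc : ℕ) = i
      rw [hji]; simp
  · -- noncrossing
    intro a c hac hca hcc
    have ha : res f a ≠ a := by intro h; rw [h] at hca; omega
    have hc : res f c ≠ c := by intro h; rw [h] at hcc; omega
    have h1 := res_arc hinv ha rfl
    have h2 := res_arc hinv hc rfl
    exact hnc a.castSucc c.castSucc (by simpa) (by rw [h1]; simpa) (by rw [h1, h2]; simpa)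
  · -- fixed points uncovered
    intro a c hfa hca hac
    have hc : res f c ≠ c := by intro h; rw [h] at hac; omega
    have h2 := res_arc hinv hc rfl
    rcases (res_fixed_iff hinv).1 hfa with h | h
    · exact hunc a.castSucc c.castSucc (by rw [h]) (by simpa) (by rw [h2]; simpa)
    · -- a.castSucc = f last, so f a.castSucc = last; arc (c, res f c) with c < a < res f c < n
      have hfa' : f a.castSucc = Fin.last n := by rw [h, hinv]
      exact hnc c.castSucc a.castSucc (by simpa) (by rw [h2]; simpa)
        (by rw [h2, hfa']; simpa using (res f c).isLt)
  · -- count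
    by_cases hlast : f (Fin.last n) = Fin.last n
    · rw [if_pos hlast] at hK
      have hset : (Finset.univ.filter (fun a : Fin (n+1) => f a = a)) =
          insert (Fin.last n)
            ((Finset.univ.filter (fun i : Fin n => res f i = i)).image Fin.castSucc) := by
        ext a
        simp only [mem_filter, mem_univ, true_and, mem_insert, mem_image]
        constructor
        · intro ha
          by_cases h : a = Fin.last n
          · exact Or.inl h
          · right
            have hlt : (a:ℕ) < n := by
              have h2 := a.isLt
              have : (a:ℕ) ≠ n := fun hh => h (by ext; simpa)
              omega
            refine ⟨⟨(a:ℕ), hlt⟩, ?_, by ext; simp⟩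
            rw [res_fixed_iff hinv]
            left
            have hco : (⟨(a:ℕ), hlt⟩ : Fin n).castSucc = a := by ext; simp
            rw [hco, ha]
        · rintro (rfl | ⟨i, hi, rfl⟩)
          · exact hlast
          · rcases (res_fixed_iff hinv).1 hi with h | h
            · exact h
            · rw [h, hinv, hlast]
      have hlastnot : Fin.last n ∉
          ((Finset.univ.filter (fun i : Fin n => res f i = i)).image Fin.castSucc) := by
        simp only [mem_image, mem_filter, mem_univ, true_and, not_exists]
        intro i
        rintro ⟨hi, hic⟩
        have := congrArg Fin.val hic
        simp at this
        omega
      rw [hset, Finset.card_insert_of_notMem hlastnot,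
        Finset.card_image_of_injective _ (Fin.castSucc_injective n)] at hcard
      omega
    · rw [if_neg hlast] at hK
      -- fixed points of res f = (f-fixed points) ∪ {f last}
      have hc : (f (Fin.last n) : ℕ) < n := by
        have h2 := (f (Fin.last n)).isLt
        have : (f (Fin.last n) : ℕ) ≠ n := by
          intro hh
          exact hlast (by ext; simpa)
        omega
      have hset : ((Finset.univ.filter (fun i : Fin n => res f i = i)).image Fin.castSucc) =
          insert (f (Fin.last n)) (Finset.univ.filter (fun a : Fin (n+1) => f a = a)) := by
        ext a
        simp only [mem_filter, mem_univ, true_and, mem_insert, mem_image]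
        constructor
        · rintro ⟨i, hi, rfl⟩
          rcases (res_fixed_iff hinv).1 hi with h | h
          · exact Or.inr h
          · exact Or.inl h
        · rintro (rfl | ha)
          · refine ⟨⟨(f (Fin.last n) : ℕ), hc⟩, ?_, by ext; simp⟩
            rw [res_fixed_iff hinv]
            right; ext; simp
          · have hafix : a ≠ Fin.last n := fun hh => hlast (hh ▸ ha)
            have hlt : (a:ℕ) < n := by
              have h2 := a.isLt
              have : (a:ℕ) ≠ n := fun hh => hafix (by ext; simpa)
              omega
            refine ⟨⟨(a:ℕ), hlt⟩, ?_, by ext; simp⟩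
            rw [res_fixed_iff hinv]
            left
            have hco : (⟨(a:ℕ), hlt⟩ : Fin n).castSucc = a := by ext; simp
            rw [hco, ha]
      have hnotmem : f (Fin.last n) ∉ (Finset.univ.filter (fun a : Fin (n+1) => f a = a)) := by
        simp only [mem_filter, mem_univ, true_and]
        intro hh
        rw [hinv] at hh
        exact hlast hh.symm
      have hcc := congrArg Finset.card hset
      rw [Finset.card_image_of_injective _ (Fin.castSucc_injective n),
        Finset.card_insert_of_notMem hnotmem, hcard] at hcc
      omega

end IsHalfAux

namespace IsHalfAux

variable {n k : ℕ} {f : Fin (n+1) → Fin (n+1)} {g : Fin n → Fin n} {c : Fin n}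

lemma ext0_last : ext0 g (Fin.last n) = Fin.last n := by
  unfold ext0; rw [dif_neg (by simp)]

lemma ext0_lt {a : Fin (n+1)} (h : (a:ℕ) < n) : ext0 g a = (g ⟨(a:ℕ), h⟩).castSucc := by
  unfold ext0; rw [dif_pos h]

lemma ext1_last (hc : (c:ℕ) < n) : ext1 g c (Fin.last n) = c.castSucc := by
  unfold ext1
  rw [if_neg (by simp; omega), dif_neg (by simp)]

lemma ext1_eqc {a : Fin (n+1)} (h : (a:ℕ) = (c:ℕ)) : ext1 g c a = Fin.last n := by
  unfold ext1; rw [if_pos h]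

lemma ext1_other {a : Fin (n+1)} (h : (a:ℕ) ≠ (c:ℕ)) (h2 : (a:ℕ) < n) :
    ext1 g c a = (g ⟨(a:ℕ), h2⟩).castSucc := by
  unfold ext1; rw [if_neg h, dif_pos h2]

lemma ext0_isHalf (hg : IsHalf n k g) : IsHalf (n+1) (k+1) (ext0 g) := by
  obtain ⟨hinv, hnc, hunc, hcard⟩ := hg
  refine ⟨?_, ?_, ?_, ?_⟩
  · intro a
    by_cases h : (a:ℕ) < n
    · rw [ext0_lt h, ext0_lt (by simpa using (g ⟨(a:ℕ), h⟩).isLt)]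
      ext
      simpa using congrArg Fin.val (hinv ⟨(a:ℕ), h⟩)
    · have ha : a = Fin.last n := by ext; have := a.isLt; simp; omega
      rw [ha, ext0_last, ext0_last]
  · intro a c hac hca hcc
    -- b := ext0 a, d := ext0 c; a < c < b < d
    have hb := (ext0 g a).isLt
    have hd := (ext0 g c).isLt
    have han : (a:ℕ) < n := by
      by_contra h
      have ha : a = Fin.last n := by ext; have := a.isLt; simp; omega
      rw [ha, ext0_last] at hca hcc
      simp at hca hcc
      omega
    rw [ext0_lt han] at hca hcc
    simp only [Fin.coe_castSucc] at hca hcc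
    have hcn : (c:ℕ) < n := by omega
    rw [ext0_lt hcn] at hcc
    simp only [Fin.coe_castSucc] at hcc
    exact hnc ⟨(a:ℕ), han⟩ ⟨(c:ℕ), hcn⟩ (by simpa) (by simpa) (by simpa)
  · intro a c hfa hca hac
    have han : (a:ℕ) < n := by
      by_contra h
      have ha : a = Fin.last n := by ext; have := a.isLt; simp; omega
      have hcn : (c:ℕ) < n := by have := c.isLt; rw [ha] at hca; simp at hca; omega
      rw [ext0_lt hcn] at hac
      have := (g ⟨(c:ℕ), hcn⟩).isLt
      rw [ha] at hac
      simp at hac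
      omega
    have hcn : (c:ℕ) < n := by omega
    rw [ext0_lt hcn] at hac
    simp only [Fin.coe_castSucc] at hac
    rw [ext0_lt han] at hfa
    have hfa' : g ⟨(a:ℕ), han⟩ = ⟨(a:ℕ), han⟩ := by
      ext
      simpa using congrArg Fin.val hfa
    exact hunc ⟨(a:ℕ), han⟩ ⟨(c:ℕ), hcn⟩ hfa' (by simpa) (by simpa)
  · have hset : (Finset.univ.filter (fun a : Fin (n+1) => ext0 g a = a)) =
        insert (Fin.last n)
          ((Finset.univ.filter (fun i : Fin n => g i = i)).image Fin.castSucc) := by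
      ext a
      simp only [mem_filter, mem_univ, true_and, mem_insert, mem_image]
      constructor
      · intro ha
        by_cases h : (a:ℕ) < n
        · right
          refine ⟨⟨(a:ℕ), h⟩, ?_, by ext; simp⟩
          rw [ext0_lt h] at ha
          ext
          simpa using congrArg Fin.val ha
        · left; ext; have := a.isLt; simp; omega
      · rintro (rfl | ⟨i, hi, rfl⟩)
        · exact ext0_last
        · rw [ext0_lt (by simpa using i.isLt)]
          have : (⟨((i.castSucc : Fin (n+1)) : ℕ), by simpa using i.isLt⟩ : Fin n) = i := by
            ext; simp
          rw [this, hi]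
    rw [hset, Finset.card_insert_of_notMem, Finset.card_image_of_injective _
      (Fin.castSucc_injective n), hcard]
    simp only [mem_image, mem_filter, mem_univ, true_and, not_exists]
    intro i
    rintro ⟨hi, hic⟩
    have := congrArg Fin.val hic
    simp at this
    omega

lemma ext1_isHalf (hg : IsHalf n (k+1) g) (hgc : g c = c)
    (hmax : ∀ i : Fin n, g i = i → (i:ℕ) ≤ (c:ℕ)) : IsHalf (n+1) k (ext1 g c) := by
  obtain ⟨hinv, hnc, hunc, hcard⟩ := hg
  have hcn : (c:ℕ) < n := c.isLt
  refine ⟨?_, ?_, ?_, ?_⟩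
  · intro a
    by_cases h1 : (a:ℕ) = (c:ℕ)
    · rw [ext1_eqc h1, ext1_last hcn]; ext; simp; omega
    · by_cases h2 : (a:ℕ) < n
      · rw [ext1_other h1 h2]
        have hgne : ((g ⟨(a:ℕ), h2⟩ : Fin n) : ℕ) ≠ (c:ℕ) := by
          intro hh
          have : g ⟨(a:ℕ), h2⟩ = c := by ext; exact hh
          have := congrArg g this
          rw [hinv, hgc] at this
          exact h1 (congrArg Fin.val this)
        rw [ext1_other (by simpa using hgne) (by simpa using (g ⟨(a:ℕ), h2⟩).isLt)]
        ext
        have : (⟨((((g ⟨(a:ℕ), h2⟩ : Fin n).castSucc : Fin (n+1))) : ℕ), by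
            simpa using (g ⟨(a:ℕ), h2⟩).isLt⟩ : Fin n) = g ⟨(a:ℕ), h2⟩ := by ext; simp
        rw [this]
        simpa using congrArg Fin.val (hinv ⟨(a:ℕ), h2⟩)
      · have ha : a = Fin.last n := by ext; have := a.isLt; simp; omega
        rw [ha, ext1_last hcn, ext1_eqc (by simp)]
  · -- noncrossing
    intro a c' hac hca hcc
    have hbd : (ext1 g c a : ℕ) < (ext1 g c c' : ℕ) := hcc
    -- classify the a-arc
    by_cases h1 : (a:ℕ) = (c:ℕ)
    · -- arc (c, last); then c < c' < last and ext1 c' > n, impossible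
      rw [ext1_eqc h1] at hca hcc
      have := (ext1 g c c').isLt
      simp at hca hcc
      omega
    · have h2 : (a:ℕ) < n := by
        by_contra h
        have ha : a = Fin.last n := by ext; have := a.isLt; simp; omega
        rw [ha] at hca
        have := c'.isLt
        simp at hca
        omega
      rw [ext1_other h1 h2] at hca hcc
      simp only [Fin.coe_castSucc] at hca hcc
      -- a-arc is a g-arc; classify the c'-arc
      by_cases h3 : (c':ℕ) = (c:ℕ)
      · -- c'-arc is (c, last): g-arc (a, g a) covers the g-fixed point c
        exact hunc c ⟨(a:ℕ), h2⟩ hgc (by rw [h3] at hac; exact hac) (by omega)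
      · have h4 : (c':ℕ) < n := by
          have := (g ⟨(a:ℕ), h2⟩).isLt; omega
        rw [ext1_other h3 h4] at hcc
        simp only [Fin.coe_castSucc] at hcc
        exact hnc ⟨(a:ℕ), h2⟩ ⟨(c':ℕ), h4⟩ (by simpa) (by simpa) (by simpa)
  · -- uncovered
    intro a c' hfa hca hac
    -- a is a fixed point of ext1
    have h1 : (a:ℕ) ≠ (c:ℕ) := by
      intro hh
      rw [ext1_eqc hh] at hfa
      have := congrArg Fin.val hfa
      simp at this
      omega
    have h2 : (a:ℕ) < n := by
      by_contra h
      have ha : a = Fin.last n := by ext; have := a.isLt; simp; omega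
      rw [ha, ext1_last hcn] at hfa
      have := congrArg Fin.val hfa
      simp at this
      omega
    rw [ext1_other h1 h2] at hfa
    have hfa' : g ⟨(a:ℕ), h2⟩ = ⟨(a:ℕ), h2⟩ := by
      ext; simpa using congrArg Fin.val hfa
    -- classify the covering arc (c', ext1 c')
    by_cases h3 : (c':ℕ) = (c:ℕ)
    · -- arc (c, last) covers a, i.e. c < a; but c is the max fixed point
      have := hmax ⟨(a:ℕ), h2⟩ hfa'
      simp at this
      omega
    · have h4 : (c':ℕ) < n := by omega
      rw [ext1_other h3 h4] at hac
      simp only [Fin.coe_castSucc] at hac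
      exact hunc ⟨(a:ℕ), h2⟩ ⟨(c':ℕ), h4⟩ hfa' (by simpa) (by simpa)
  · -- count
    have hset : (Finset.univ.filter (fun a : Fin (n+1) => ext1 g c a = a)) =
        (((Finset.univ.filter (fun i : Fin n => g i = i)).erase c).image Fin.castSucc) := by
      ext a
      simp only [mem_filter, mem_univ, true_and, mem_image, mem_erase]
      constructor
      · intro ha
        have h1 : (a:ℕ) ≠ (c:ℕ) := by
          intro hh
          rw [ext1_eqc hh] at ha
          have := congrArg Fin.val ha
          simp at this
          omega
        have h2 : (a:ℕ) < n := by
          by_contra h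
          have ha' : a = Fin.last n := by ext; have := a.isLt; simp; omega
          rw [ha', ext1_last hcn] at ha
          have := congrArg Fin.val ha
          simp at this
          omega
        rw [ext1_other h1 h2] at ha
        refine ⟨⟨(a:ℕ), h2⟩, ⟨fun hh => h1 (congrArg Fin.val hh), ?_⟩, by ext; simp⟩
        ext; simpa using congrArg Fin.val ha
      · rintro ⟨i, ⟨hic, hi⟩, rfl⟩
        rw [ext1_other (by simpa using fun hh => hic (Fin.ext hh)) (by simpa using i.isLt)]
        have : (⟨((i.castSucc : Fin (n+1)) : ℕ), by simpa using i.isLt⟩ : Fin n) = i := by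
          ext; simp
        rw [this, hi]
    rw [hset, Finset.card_image_of_injective _ (Fin.castSucc_injective n),
      Finset.card_erase_of_mem (by simp [hgc]), hcard]
    omega

end IsHalfAux

namespace IsHalfAux

variable {n k : ℕ} {f : Fin (n+1) → Fin (n+1)} {g : Fin n → Fin n} {c : Fin n}

lemma mk_castSucc (i : Fin n) (h : ((i.castSucc : Fin (n+1)) : ℕ) < n) :
    (⟨((i.castSucc : Fin (n+1)) : ℕ), h⟩ : Fin n) = i := Fin.ext (by simp)

lemma castSucc_mk (a : Fin (n+1)) (h : (a:ℕ) < n) :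
    ((⟨(a:ℕ), h⟩ : Fin n)).castSucc = a := Fin.ext (by simp)

lemma res_ext0 : res (ext0 g) = g := by
  funext i
  have h1 : ext0 g i.castSucc = (g i).castSucc := by
    rw [ext0_lt (by simpa using i.isLt : ((i.castSucc : Fin (n+1)) : ℕ) < n), mk_castSucc]
  unfold res
  rw [h1, dif_pos (by simpa using (g i).isLt)]
  ext
  simp

lemma res_ext1 (hinv : ∀ a, g (g a) = a) (hgc : g c = c) : res (ext1 g c) = g := by
  funext i
  by_cases h : (i:ℕ) = (c:ℕ)
  · have h1 : ext1 g c i.castSucc = Fin.last n := ext1_eqc (by simpa using h)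
    unfold res
    rw [h1, dif_neg (by simp)]
    have hic : i = c := Fin.ext h
    rw [hic, hgc]
  · have h1 : ext1 g c i.castSucc = (g i).castSucc := by
      rw [ext1_other (by simpa using h) (by simpa using i.isLt), mk_castSucc]
    unfold res
    rw [h1, dif_pos (by simpa using (g i).isLt)]
    ext
    simp

lemma ext0_res (hinv : ∀ a, f (f a) = a) (hlast : f (Fin.last n) = Fin.last n) :
    ext0 (res f) = f := by
  funext a
  by_cases h : (a:ℕ) < n
  · rw [ext0_lt h]
    have hfa : (f a : ℕ) < n := by
      have h2 := (f a).isLt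
      have : (f a : ℕ) ≠ n := by
        intro hh
        have hfl : f a = Fin.last n := Fin.ext (by simpa)
        have := congrArg f hfl
        rw [hinv, hlast] at this
        rw [this] at h
        simp at h
      omega
    have hres : res f ⟨(a:ℕ), h⟩ = ⟨(f a : ℕ), hfa⟩ := by
      unfold res
      rw [castSucc_mk]
      rw [dif_pos hfa]
    rw [hres]
    ext
    simp
  · have ha : a = Fin.last n := Fin.ext (by have := a.isLt; simp; omega)
    rw [ha, ext0_last, hlast]

lemma max_fixed_res (hf : IsHalf (n+1) k f) (hlast : f (Fin.last n) ≠ Fin.last n)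
    (hc : (f (Fin.last n) : ℕ) < n) :
    (res f ⟨(f (Fin.last n) : ℕ), hc⟩ = ⟨(f (Fin.last n) : ℕ), hc⟩) ∧
    (∀ i : Fin n, res f i = i → (i:ℕ) ≤ (f (Fin.last n) : ℕ)) := by
  obtain ⟨hinv, hnc, hunc, hcard⟩ := hf
  constructor
  · rw [res_fixed_iff hinv]
    right
    ext; simp
  · intro i hi
    by_contra hgt
    push_neg at hgt
    rcases (res_fixed_iff hinv).1 hi with h | h
    · exact hunc i.castSucc (f (Fin.last n)) h (by simpa) (by
        rw [hinv]
        simpa using i.isLt)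
    · have := congrArg Fin.val h
      simp at this
      omega

lemma ext1_res (hf : IsHalf (n+1) k f) (hlast : f (Fin.last n) ≠ Fin.last n)
    (hc : (f (Fin.last n) : ℕ) < n) :
    ext1 (res f) ⟨(f (Fin.last n) : ℕ), hc⟩ = f := by
  obtain ⟨hinv, hnc, hunc, hcard⟩ := hf
  funext a
  by_cases h1 : (a:ℕ) = (f (Fin.last n) : ℕ)
  · rw [ext1_eqc (by simpa using h1)]
    have ha : a = f (Fin.last n) := Fin.ext h1
    rw [ha, hinv]
  · by_cases h2 : (a:ℕ) < n
    · rw [ext1_other (by simpa using h1) h2]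
      have hfa : (f a : ℕ) < n := by
        have hh := (f a).isLt
        have : (f a : ℕ) ≠ n := by
          intro hh2
          have hfl : f a = Fin.last n := Fin.ext (by simpa)
          have := congrArg f hfl
          rw [hinv] at this
          exact h1 (by rw [← this])
        omega
      have hres : res f ⟨(a:ℕ), h2⟩ = ⟨(f a : ℕ), hfa⟩ := by
        unfold res
        rw [castSucc_mk]
        rw [dif_pos hfa]
      rw [hres]
      ext
      simp
    · have ha : a = Fin.last n := Fin.ext (by have := a.isLt; simp; omega)
      rw [ha, ext1_last (c := ⟨(f (Fin.last n) : ℕ), hc⟩) hc]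
      ext
      simp

end IsHalfAux

namespace IsHalfAux

variable {n k : ℕ} {f : Fin (n+1) → Fin (n+1)} {g : Fin n → Fin n} {c : Fin n}

def maxFix (g : Fin n → Fin n) (hne : (Finset.univ.filter (fun a => g a = a)).Nonempty) :
    Fin n := Finset.max' _ hne

lemma fixedNonempty {j : ℕ} (hg : IsHalf n (j+1) g) :
    (Finset.univ.filter (fun a => g a = a)).Nonempty :=
  Finset.card_pos.mp (by rw [hg.2.2.2]; omega)

lemma maxFix_fixed (hne) : g (maxFix g hne) = maxFix g hne := by
  have := Finset.max'_mem _ hne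
  simpa [maxFix] using (Finset.mem_filter.mp this).2

lemma maxFix_max (hne) : ∀ i, g i = i → (i:ℕ) ≤ (maxFix g hne : ℕ) := by
  intro i hi
  have : i ≤ maxFix g hne := Finset.le_max' _ i (by simp [hi])
  exact this

lemma maxFix_eq (hf : IsHalf (n+1) k f) (hlast : f (Fin.last n) ≠ Fin.last n)
    (hc : (f (Fin.last n) : ℕ) < n) (hne) :
    maxFix (res f) hne = ⟨(f (Fin.last n) : ℕ), hc⟩ := by
  obtain ⟨hfix, hmax⟩ := max_fixed_res hf hlast hc
  refine le_antisymm ?_ ?_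
  · apply Finset.max'_le
    intro y hy
    have := hmax y (Finset.mem_filter.mp hy).2
    exact this
  · exact Finset.le_max' _ _ (by simp [hfix])

lemma flast_lt (hlast : f (Fin.last n) ≠ Fin.last n) : (f (Fin.last n) : ℕ) < n := by
  have h2 := (f (Fin.last n)).isLt
  have : (f (Fin.last n) : ℕ) ≠ n := fun hh => hlast (Fin.ext (by simpa))
  omega

def equivA (n k : ℕ) : {f : Fin (n+1) → Fin (n+1) // IsHalf (n+1) (k+1) f} ≃
    ({g : Fin n → Fin n // IsHalf n k g} ⊕ {g : Fin n → Fin n // IsHalf n (k+2) g}) where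
  toFun := fun p =>
    if h : p.1 (Fin.last n) = Fin.last n then
      Sum.inl ⟨res p.1, res_isHalf p.2 k (by rw [if_pos h])⟩
    else
      Sum.inr ⟨res p.1, res_isHalf p.2 (k+2) (by rw [if_neg h])⟩
  invFun := fun x =>
    match x with
    | Sum.inl q => ⟨ext0 q.1, ext0_isHalf q.2⟩
    | Sum.inr q => ⟨ext1 q.1 (maxFix q.1 (fixedNonempty q.2)),
        ext1_isHalf q.2 (maxFix_fixed _) (maxFix_max _)⟩
  left_inv := by
    rintro ⟨f, hf⟩
    by_cases h : f (Fin.last n) = Fin.last n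
    · simp only [dif_pos h]
      exact Subtype.ext (ext0_res hf.1 h)
    · simp only [dif_neg h]
      apply Subtype.ext
      show ext1 (res f) _ = f
      rw [maxFix_eq hf h (flast_lt h)]
      exact ext1_res hf h (flast_lt h)
  right_inv := by
    rintro (⟨g, hg⟩ | ⟨g, hg⟩)
    · have h : (ext0 g) (Fin.last n) = Fin.last n := ext0_last
      simp only [dif_pos h]
      exact congrArg Sum.inl (Subtype.ext res_ext0)
    · have h : (ext1 g (maxFix g (fixedNonempty hg))) (Fin.last n) ≠ Fin.last n := by
        rw [ext1_last (maxFix g (fixedNonempty hg)).isLt]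
        intro hh
        have := congrArg Fin.val hh
        simp at this
        have := (maxFix g (fixedNonempty hg)).isLt
        omega
      simp only [dif_neg h]
      exact congrArg Sum.inr (Subtype.ext (res_ext1 hg.1 (maxFix_fixed _)))

def equivB (n : ℕ) : {f : Fin (n+1) → Fin (n+1) // IsHalf (n+1) 0 f} ≃
    {g : Fin n → Fin n // IsHalf n 1 g} where
  toFun := fun p =>
    ⟨res p.1, res_isHalf p.2 1 (by
      rw [if_neg]
      intro h
      have : Fin.last n ∈ Finset.univ.filter (fun a => p.1 a = a) := by simp [h]
      have hc := p.2.2.2.2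
      rw [Finset.card_eq_zero] at hc
      rw [hc] at this
      simp at this)⟩
  invFun := fun q => ⟨ext1 q.1 (maxFix q.1 (fixedNonempty q.2)),
      ext1_isHalf (k := 0) q.2 (maxFix_fixed _) (maxFix_max _)⟩
  left_inv := by
    rintro ⟨f, hf⟩
    have h : f (Fin.last n) ≠ Fin.last n := by
      intro h
      have : Fin.last n ∈ Finset.univ.filter (fun a => f a = a) := by simp [h]
      have hc := hf.2.2.2
      rw [Finset.card_eq_zero] at hc
      rw [hc] at this
      simp at this
    apply Subtype.ext
    show ext1 (res f) _ = f
    rw [maxFix_eq hf h (flast_lt h)]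
    exact ext1_res hf h (flast_lt h)
  right_inv := by
    rintro ⟨g, hg⟩
    exact Subtype.ext (res_ext1 hg.1 (maxFix_fixed _))

lemma card_half_succ (n k : ℕ) :
    Nat.card {f : Fin (n+1) → Fin (n+1) // IsHalf (n+1) (k+1) f} =
      Nat.card {g : Fin n → Fin n // IsHalf n k g} +
      Nat.card {g : Fin n → Fin n // IsHalf n (k+2) g} := by
  rw [Nat.card_congr (equivA n k), Nat.card_sum]

lemma card_half_zero (n : ℕ) :
    Nat.card {f : Fin (n+1) → Fin (n+1) // IsHalf (n+1) 0 f} =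
      Nat.card {g : Fin n → Fin n // IsHalf n 1 g} :=
  Nat.card_congr (equivB n)

lemma card_half_base0 : Nat.card {f : Fin 0 → Fin 0 // IsHalf 0 0 f} = 1 := by
  have hall : ∀ f : Fin 0 → Fin 0, IsHalf 0 0 f :=
    fun f => ⟨fun a => a.elim0, fun a => a.elim0, fun a => a.elim0, by simp⟩
  rw [Nat.card_congr (Equiv.subtypeUnivEquiv hall)]
  simp [Nat.card_eq_fintype_card]

lemma card_half_base_pos (k : ℕ) :
    Nat.card {f : Fin 0 → Fin 0 // IsHalf 0 (k+1) f} = 0 := by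
  have : IsEmpty {f : Fin 0 → Fin 0 // IsHalf 0 (k+1) f} := by
    rw [isEmpty_subtype]
    intro f
    intro hf
    have := hf.2.2.2
    have hle : (Finset.univ.filter (fun a : Fin 0 => f a = a)).card ≤ 0 := by
      refine le_trans (Finset.card_filter_le _ _) (by simp)
    omega
  simp [Nat.card_of_isEmpty]

end IsHalfAux

def Bk (n k : ℕ) : ℤ :=
  if k ≤ n ∧ (n - k) % 2 = 0 then
    (n.choose ((n-k)/2) : ℤ) - (if (n-k)/2 = 0 then 0 else (n.choose ((n-k)/2 - 1) : ℤ))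
  else 0

namespace BkAux

lemma Bk_succ (n k : ℕ) : Bk (n+1) (k+1) = Bk n k + Bk n (k+2) := by
  by_cases hp : k + 1 ≤ n + 1 ∧ (n + 1 - (k+1)) % 2 = 0
  · have hkn : k ≤ n := by omega
    have hpar : (n - k) % 2 = 0 := by omega
    have heq : n + 1 - (k+1) = n - k := by omega
    have c1 : k ≤ n ∧ (n - k) % 2 = 0 := ⟨hkn, hpar⟩
    by_cases h2 : k + 2 ≤ n
    · have hpar2 : (n - (k+2)) % 2 = 0 := by omega
      have c2 : k + 2 ≤ n ∧ (n - (k+2)) % 2 = 0 := ⟨h2, hpar2⟩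
      have hj : 1 ≤ (n - k)/2 := by omega
      obtain ⟨m, hm⟩ : ∃ m, (n - k)/2 = m + 1 := ⟨(n-k)/2 - 1, by omega⟩
      have hj2 : (n - (k+2))/2 = m := by omega
      simp only [Bk]
      rw [if_pos hp, if_pos c1, if_pos c2, heq, hm, hj2,
        if_neg (show ¬(m+1 = 0) by omega)]
      rcases Nat.eq_zero_or_pos m with rfl | hmpos
      · rw [if_pos rfl]
        simp only [Nat.zero_add, Nat.add_sub_cancel, Nat.choose_one_right,
          Nat.choose_zero_right]
        push_cast
        ring_nf
        norm_num
      · obtain ⟨m', rfl⟩ : ∃ m', m = m' + 1 := ⟨m - 1, by omega⟩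
        rw [if_neg (show ¬(m'+1 = 0) by omega)]
        simp only [Nat.add_sub_cancel]
        have p1 : (n+1).choose (m'+1+1) = n.choose (m'+1) + n.choose (m'+1+1) :=
          Nat.choose_succ_succ n (m'+1)
        have p2 : (n+1).choose (m'+1) = n.choose m' + n.choose (m'+1) :=
          Nat.choose_succ_succ n m'
        push_cast [p1, p2]
        ring
    · have hnk : n = k := by omega
      have hj0 : (n - k)/2 = 0 := by omega
      have hc2 : ¬(k + 2 ≤ n ∧ (n - (k+2)) % 2 = 0) := by omega
      simp only [Bk]
      rw [if_pos hp, if_pos c1, if_neg hc2, heq, hj0, if_pos rfl]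
      simp
  · have h1 : ¬(k ≤ n ∧ (n - k) % 2 = 0) := by omega
    have h2 : ¬(k+2 ≤ n ∧ (n - (k+2)) % 2 = 0) := by omega
    simp only [Bk]
    rw [if_neg hp, if_neg h1, if_neg h2]
    ring

lemma Bk_zero (n : ℕ) : Bk (n+1) 0 = Bk n 1 := by
  by_cases hp : (n+1) % 2 = 0
  · obtain ⟨m, rfl⟩ : ∃ m, n = 2*m + 1 := ⟨n/2, by omega⟩
    have hp1 : (0 : ℕ) ≤ 2*m+1+1 ∧ (2*m+1+1-0) % 2 = 0 := by omega
    have hp2 : 1 ≤ 2*m+1 ∧ (2*m+1-1) % 2 = 0 := by omega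
    have e1 : (2*m+1+1-0)/2 = m + 1 := by omega
    have e2 : (2*m+1-1)/2 = m := by omega
    simp only [Bk]
    rw [if_pos hp1, if_pos hp2, e1, e2, if_neg (show ¬(m+1=0) by omega)]
    simp only [Nat.add_sub_cancel]
    have hsymm : (2*m+1).choose (m+1) = (2*m+1).choose m := by
      have h := Nat.choose_symm (show m ≤ 2*m+1 by omega)
      have he : 2*m+1-m = m+1 := by omega
      rw [he] at h
      exact h
    have p1 : (2*m+1+1).choose (m+1) = (2*m+1).choose m + (2*m+1).choose (m+1) :=
      Nat.choose_succ_succ (2*m+1) m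
    rcases Nat.eq_zero_or_pos m with rfl | hmpos
    · rw [if_pos rfl]
      norm_num [Nat.choose]
    · obtain ⟨m', rfl⟩ : ∃ m', m = m' + 1 := ⟨m - 1, by omega⟩
      rw [if_neg (show ¬(m'+1=0) by omega)]
      simp only [Nat.add_sub_cancel]
      have p2 : (2*(m'+1)+1+1).choose (m'+1) =
          (2*(m'+1)+1).choose m' + (2*(m'+1)+1).choose (m'+1) :=
        Nat.choose_succ_succ (2*(m'+1)+1) m'
      push_cast [p1, p2, hsymm]
      ring
  · have h1 : ¬((0:ℕ) ≤ n + 1 ∧ (n+1-0) % 2 = 0) := by omega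
    have h2 : ¬(1 ≤ n ∧ (n - 1) % 2 = 0) := by omega
    simp only [Bk]
    rw [if_neg h1, if_neg h2]

end BkAux

namespace BkAux

lemma sum_sq_choose (N : ℕ) :
    ∑ i ∈ range (N+1), (N.choose i : ℤ) * N.choose i = ((2*N).choose N : ℤ) := by
  have h := Nat.add_choose_eq N N N
  rw [Finset.Nat.sum_antidiagonal_eq_sum_range_succ_mk] at h
  have h2 : ∑ k ∈ range (N+1), N.choose k * N.choose (N - k)
      = ∑ k ∈ range (N+1), N.choose k * N.choose k := by
    apply Finset.sum_congr rfl
    intro k hk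
    rw [Nat.choose_symm (by simp at hk; omega)]
  rw [h2] at h
  have e : (2*N) = N + N := by ring
  rw [e]
  push_cast [h]
  ring

lemma sum_choose_mul_succ (N : ℕ) (hN : 1 ≤ N) :
    ∑ i ∈ range (N+1), (N.choose i : ℤ) * N.choose (i+1) = ((2*N).choose (N-1) : ℤ) := by
  have h := Nat.add_choose_eq N N (N-1)
  rw [Finset.Nat.sum_antidiagonal_eq_sum_range_succ_mk] at h
  rw [show (N-1).succ = N from by omega] at h
  have h2 : ∑ k ∈ range N, N.choose k * N.choose (N - 1 - k)
      = ∑ k ∈ range N, N.choose k * N.choose (k+1) := by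
    apply Finset.sum_congr rfl
    intro k hk
    simp only [mem_range] at hk
    rw [show N - 1 - k = N - (k+1) from by omega, Nat.choose_symm (by omega)]
  rw [h2] at h
  have h3 : ∑ i ∈ range (N+1), (N.choose i : ℤ) * N.choose (i+1)
      = ∑ i ∈ range N, (N.choose i : ℤ) * N.choose (i+1) := by
    rw [Finset.sum_range_succ, Nat.choose_eq_zero_of_lt (by omega : N < N + 1)]
    push_cast
    ring
  rw [h3]
  have e : (2*N) = N + N := by ring
  rw [e, h]
  push_cast
  rfl

/-- the summand -/
noncomputable def dk (N j : ℕ) : ℤ :=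
  (N.choose j : ℤ) - (if j = 0 then 0 else (N.choose (j-1) : ℤ))

lemma dk_reflect (N : ℕ) {j : ℕ} (hj : j ≤ N + 1) : dk N (N+1-j) = - dk N j := by
  unfold dk
  by_cases h0 : j = 0
  · subst h0
    simp only [Nat.sub_zero, if_pos rfl]
    rw [if_neg (show ¬ N+1 = 0 by omega),
      Nat.choose_eq_zero_of_lt (show N < N+1 by omega), Nat.add_sub_cancel, Nat.choose_self]
    norm_num
  · by_cases h1 : j = N+1
    · subst h1
      simp only [Nat.sub_self, if_pos rfl]
      rw [if_neg (show ¬ N+1 = 0 by omega), Nat.choose_zero_right,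
        Nat.choose_eq_zero_of_lt (show N < N+1 by omega), Nat.add_sub_cancel, Nat.choose_self]
      norm_num
    · have hjN : j ≤ N := by omega
      rw [if_neg (show ¬ N+1-j = 0 by omega), if_neg h0]
      rw [show N+1-j-1 = N - j from by omega]
      rw [show N+1-j = N - (j-1) from by omega]
      rw [Nat.choose_symm (show j-1 ≤ N by omega), Nat.choose_symm hjN]
      ring

lemma sum_dk_tail (N : ℕ) :
    ∑ j ∈ Ico (N/2 + 1) (N+2), (dk N j)^2 = ∑ j ∈ range (N/2 + 1), (dk N j)^2 := by
  rcases Nat.even_or_odd N with he | ho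
  · obtain ⟨t, rfl⟩ := he
    refine Finset.sum_nbij' (fun j => t+t+1-j) (fun j => t+t+1-j) ?_ ?_ ?_ ?_ ?_
    · intro a ha
      simp only [mem_Ico] at ha
      simp only [mem_range]
      omega
    · intro a ha
      simp only [mem_range] at ha
      simp only [mem_Ico]
      omega
    · intro a ha
      simp only [mem_Ico] at ha
      show t+t+1-(t+t+1-a) = a
      omega
    · intro a ha
      simp only [mem_range] at ha
      show t+t+1-(t+t+1-a) = a
      omega
    · intro a ha
      simp only [mem_Ico] at ha
      show dk (t+t) a ^ 2 = dk (t+t) (t+t+1-a) ^ 2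
      rw [dk_reflect (t+t) (show a ≤ t+t+1 by omega)]
      ring
  · obtain ⟨t, rfl⟩ := ho
    have hmid : dk (2*t+1) (t+1) = 0 := by
      have h := dk_reflect (2*t+1) (show t+1 ≤ 2*t+1+1 by omega)
      rw [show 2*t+1+1-(t+1) = t+1 from by omega] at h
      omega
    have h2 : insert (t+1) (Ico (t+1+1) (2*t+3)) = Ico (t+1) (2*t+3) := by
      rw [Finset.Ico_add_one_left_eq_Ioo (t+1) (2*t+3), Finset.Ioo_insert_left (show t+1 < 2*t+3 by omega)]
    have hsplit : Ico ((2*t+1)/2 + 1) (2*t+1+2) = insert (t+1) (Ico (t+2) (2*t+3)) := by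
      rw [show (2*t+1)/2 + 1 = t + 1 from by omega,
        show 2*t+1+2 = 2*t+3 from by omega, show t+2 = t+1+1 from rfl, h2]
    rw [hsplit, Finset.sum_insert (by simp), hmid]
    rw [show ((0:ℤ)^2) = 0 from by ring, zero_add]
    refine Finset.sum_nbij' (fun j => 2*t+1+1-j) (fun j => 2*t+1+1-j) ?_ ?_ ?_ ?_ ?_
    · intro a ha
      simp only [mem_Ico] at ha
      simp only [mem_range]
      omega
    · intro a ha
      simp only [mem_range] at ha
      simp only [mem_Ico]
      omega
    · intro a ha
      simp only [mem_Ico] at ha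
      show 2*t+1+1-(2*t+1+1-a) = a
      omega
    · intro a ha
      simp only [mem_range] at ha
      show 2*t+1+1-(2*t+1+1-a) = a
      omega
    · intro a ha
      simp only [mem_Ico] at ha
      show dk (2*t+1) a ^ 2 = dk (2*t+1) (2*t+1+1-a) ^ 2
      rw [dk_reflect (2*t+1) (show a ≤ 2*t+1+1 by omega)]
      ring

lemma sum_dk_full (N : ℕ) (hN : 1 ≤ N) :
    ∑ j ∈ range (N+2), (dk N j)^2
      = 2 * ((2*N).choose N : ℤ) - 2 * ((2*N).choose (N-1) : ℤ) := by
  have expand : ∀ j, (dk N j)^2 = ((N.choose j : ℤ) * N.choose j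
      + (if j = 0 then 0 else (N.choose (j-1) : ℤ) * (N.choose (j-1) : ℤ)))
      - 2 * (if j = 0 then 0 else (N.choose j : ℤ) * (N.choose (j-1) : ℤ)) := by
    intro j
    unfold dk
    by_cases h : j = 0
    · rw [if_pos h, if_pos h, if_pos h]; ring
    · rw [if_neg h, if_neg h, if_neg h]; ring
  rw [Finset.sum_congr rfl (fun j _ => expand j)]
  rw [Finset.sum_sub_distrib, Finset.sum_add_distrib, ← Finset.mul_sum]
  have e1 : ∑ j ∈ range (N+2), (N.choose j : ℤ) * N.choose j = ((2*N).choose N : ℤ) := by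
    rw [Finset.sum_range_succ, Nat.choose_eq_zero_of_lt (by omega : N < N+1)]
    push_cast
    rw [sum_sq_choose]
    ring
  have e2 : ∑ j ∈ range (N+2),
      (if j = 0 then 0 else (N.choose (j-1) : ℤ) * (N.choose (j-1) : ℤ))
      = ((2*N).choose N : ℤ) := by
    rw [Finset.sum_range_succ']
    have hc : ∀ i ∈ range (N+1),
        (if (i+1) = 0 then (0:ℤ) else (N.choose (i+1-1) : ℤ) * (N.choose (i+1-1) : ℤ))
        = (N.choose i : ℤ) * N.choose i := by
      intro i _
      rw [if_neg (by omega)]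
      simp
    rw [Finset.sum_congr rfl hc, if_pos rfl, add_zero, sum_sq_choose]
  have e3 : ∑ j ∈ range (N+2),
      (if j = 0 then 0 else (N.choose j : ℤ) * (N.choose (j-1) : ℤ))
      = ((2*N).choose (N-1) : ℤ) := by
    rw [Finset.sum_range_succ']
    have hc : ∀ i ∈ range (N+1),
        (if (i+1) = 0 then (0:ℤ) else (N.choose (i+1) : ℤ) * (N.choose (i+1-1) : ℤ))
        = (N.choose i : ℤ) * N.choose (i+1) := by
      intro i _
      rw [if_neg (by omega)]
      simp only [Nat.add_sub_cancel]
      ring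
    rw [Finset.sum_congr rfl hc, if_pos rfl, add_zero, sum_choose_mul_succ N hN]
  rw [e1, e2, e3]
  ring

lemma catalan_eq (N : ℕ) (hN : 1 ≤ N) :
    (catalan N : ℤ) = ((2*N).choose N : ℤ) - ((2*N).choose (N-1) : ℤ) := by
  have hcb : ((N+1) * catalan N : ℤ) = ((2*N).choose N : ℤ) := by
    have := succ_mul_catalan_eq_centralBinom N
    have h2 : N.centralBinom = (2*N).choose N := rfl
    rw [h2] at this
    exact_mod_cast congrArg (fun x : ℕ => (x : ℤ)) this
  have hratio : ((2*N).choose N : ℤ) * N = ((2*N).choose (N-1) : ℤ) * (N+1) := by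
    have h := Nat.choose_succ_right_eq (2*N) (N-1)
    rw [show N - 1 + 1 = N from by omega, show 2*N - (N-1) = N+1 from by omega] at h
    exact_mod_cast congrArg (fun x : ℕ => (x : ℤ)) h
  have hne : ((N:ℤ)+1) ≠ 0 := by positivity
  apply mul_left_cancel₀ hne
  rw [hcb]
  have : ((N:ℤ)+1) * (((2*N).choose N : ℤ) - ((2*N).choose (N-1) : ℤ))
      = ((2*N).choose N : ℤ) * (N+1) - ((2*N).choose (N-1) : ℤ) * (N+1) := by ring
  rw [this, ← hratio]
  ring

lemma sum_bk_sq (N : ℕ) : ∑ k ∈ range (N+1), (Bk N k)^2 = (catalan N : ℤ) := by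
  rcases Nat.eq_zero_or_pos N with rfl | hN
  · simp [Bk]
  -- step A: reindex
  have hA : ∑ k ∈ range (N+1), (Bk N k)^2 = ∑ j ∈ range (N/2 + 1), (dk N j)^2 := by
    have hsq : ∀ k, (Bk N k)^2
        = if k ≤ N ∧ (N - k) % 2 = 0 then (dk N ((N-k)/2))^2 else 0 := by
      intro k
      unfold Bk dk
      by_cases h : k ≤ N ∧ (N - k) % 2 = 0
      · rw [if_pos h, if_pos h]
      · rw [if_neg h, if_neg h]
        ring
    rw [Finset.sum_congr rfl (fun k _ => hsq k), ← Finset.sum_filter]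
    refine Finset.sum_nbij' (fun k => (N-k)/2) (fun j => N - 2*j) ?_ ?_ ?_ ?_ ?_
    · intro a ha
      simp only [mem_filter, mem_range] at ha
      simp only [mem_range]
      omega
    · intro a ha
      simp only [mem_range] at ha
      simp only [mem_filter, mem_range]
      omega
    · intro a ha
      simp only [mem_filter, mem_range] at ha
      show N - 2*((N-a)/2) = a
      omega
    · intro a ha
      simp only [mem_range] at ha
      show (N - (N - 2*a))/2 = a
      omega
    · intro a ha
      simp only [mem_filter, mem_range] at ha
      show dk N ((N-a)/2) ^ 2 = dk N ((N-a)/2) ^ 2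
      rfl
  rw [hA]
  have hB : 2 * ∑ j ∈ range (N/2 + 1), (dk N j)^2 = ∑ j ∈ range (N+2), (dk N j)^2 := by
    rw [← Finset.sum_range_add_sum_Ico _ (show N/2 + 1 ≤ N + 2 by omega), sum_dk_tail]
    ring
  have := sum_dk_full N hN
  rw [← hB] at this
  have hcat := catalan_eq N hN
  have h2 : (2:ℤ) * ∑ j ∈ range (N/2 + 1), (dk N j)^2 = 2 * (catalan N : ℤ) := by
    rw [this, hcat]
    ring
  linarith

end BkAux

namespace DiagAux

variable {n : ℕ}

def bpt (i : Fin n) : Fin (2*n) := ⟨(i:ℕ), by have := i.isLt; omega⟩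

def tpt (i : Fin n) : Fin (2*n) := ⟨2*n-1-(i:ℕ), by have := i.isLt; omega⟩

@[simp] lemma bpt_val (i : Fin n) : (bpt i : ℕ) = (i:ℕ) := rfl

@[simp] lemma tpt_val (i : Fin n) : (tpt i : ℕ) = 2*n-1-(i:ℕ) := rfl

lemma bpt_lt (i : Fin n) : (bpt i : ℕ) < n := i.isLt

lemma tpt_ge (i : Fin n) : n ≤ (tpt i : ℕ) := by have := i.isLt; simp; omega

@[simp] lemma pos_bpt (i : Fin n) : diagPos n (bpt i) = (i:ℕ) := by
  have := i.isLt
  simp [diagPos, bpt, this]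

@[simp] lemma pos_tpt (i : Fin n) : diagPos n (tpt i) = n + (i:ℕ) := by
  have := i.isLt
  simp only [diagPos, tpt_val]
  show (if 2*n-1-(i:ℕ) < n then 2*n-1-(i:ℕ) else 3*n-1-(2*n-1-(i:ℕ))) = n + (i:ℕ)
  rw [if_neg (by omega)]
  omega

lemma bpt_inj {i j : Fin n} (h : bpt i = bpt j) : i = j := by
  have := congrArg Fin.val h
  simp at this
  exact Fin.ext this

lemma tpt_inj {i j : Fin n} (h : tpt i = tpt j) : i = j := by
  have h2 := congrArg Fin.val h
  have := i.isLt
  have := j.isLt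
  simp at h2
  exact Fin.ext (by omega)

lemma tpt_mk {a : Fin (2*n)} (ha : n ≤ (a:ℕ)) :
    tpt ⟨2*n-1-(a:ℕ), by have := a.isLt; omega⟩ = a := by
  have := a.isLt
  apply Fin.ext
  simp
  omega

def leftF (m : Fin (2*n) → Fin (2*n)) : Fin n → Fin n :=
  fun i => if h : ((m (bpt i)) : ℕ) < n then ⟨((m (bpt i)) : ℕ), h⟩ else i

def rightF (m : Fin (2*n) → Fin (2*n)) : Fin n → Fin n :=
  fun i => if h : n ≤ ((m (tpt i)) : ℕ) then
    ⟨2*n-1-((m (tpt i)):ℕ), by have := (m (tpt i)).isLt; have := i.isLt; omega⟩ else i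

variable {m : Fin (2*n) → Fin (2*n)}

lemma leftF_fixed_iff (hm : IsDiagram n m) {i : Fin n} :
    leftF m i = i ↔ n ≤ ((m (bpt i)) : ℕ) := by
  unfold leftF
  constructor
  · intro h
    by_contra hc
    push_neg at hc
    rw [dif_pos hc] at h
    have hv := congrArg Fin.val h
    simp at hv
    exact hm.1 (bpt i) (Fin.ext (by simpa using hv))
  · intro h
    rw [dif_neg (by omega)]

lemma leftF_arc (hm : IsDiagram n m) {i : Fin n} (h : leftF m i ≠ i) :
    m (bpt i) = bpt (leftF m i) := by
  have hlt : ((m (bpt i)) : ℕ) < n := by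
    by_contra hc
    exact h ((leftF_fixed_iff hm).2 (by omega))
  unfold leftF
  rw [dif_pos hlt]
  apply Fin.ext
  simp [bpt]

lemma rightF_fixed_iff (hm : IsDiagram n m) {i : Fin n} :
    rightF m i = i ↔ ((m (tpt i)) : ℕ) < n := by
  unfold rightF
  constructor
  · intro h
    by_contra hc
    push_neg at hc
    rw [dif_pos hc] at h
    have hv := congrArg Fin.val h
    simp at hv
    have h1 := i.isLt
    have h2 := (m (tpt i)).isLt
    have : ((m (tpt i)) : ℕ) = ((tpt i : Fin (2*n)) : ℕ) := by simp; omega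
    exact hm.1 (tpt i) (Fin.ext this)
  · intro h
    rw [dif_neg (by omega)]

lemma rightF_arc (hm : IsDiagram n m) {i : Fin n} (h : rightF m i ≠ i) :
    m (tpt i) = tpt (rightF m i) := by
  have hge : n ≤ ((m (tpt i)) : ℕ) := by
    by_contra hc
    exact h ((rightF_fixed_iff hm).2 (by omega))
  have h2 := (m (tpt i)).isLt
  unfold rightF
  rw [dif_pos hge]
  apply Fin.ext
  simp [tpt]
  omega

lemma leftF_val {i : Fin n} (h : ((m (bpt i)) : ℕ) < n) :
    (leftF m i : ℕ) = ((m (bpt i)) : ℕ) := by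
  unfold leftF
  rw [dif_pos h]

lemma rightF_val {i : Fin n} (h : n ≤ ((m (tpt i)) : ℕ)) :
    (rightF m i : ℕ) = 2*n-1-((m (tpt i)) : ℕ) := by
  unfold rightF
  rw [dif_pos h]

lemma leftF_isHalf (hm : IsDiagram n m) : IsHalf n (throughCount n m) (leftF m) := by
  obtain ⟨hfpf, hinv, hnc⟩ := hm
  have hm' : IsDiagram n m := ⟨hfpf, hinv, hnc⟩
  refine ⟨?_, ?_, ?_, ?_⟩
  · intro i
    by_cases h : leftF m i = i
    · rw [h, h]
    · have h1 := leftF_arc hm' h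
      have h2 : m (bpt (leftF m i)) = bpt i := by rw [← h1, hinv]
      have h3 : ((m (bpt (leftF m i))) : ℕ) < n := by rw [h2]; exact i.isLt
      apply Fin.ext
      rw [leftF_val h3, h2]
      rfl
  · intro a c hac hca hcc
    have ha : leftF m a ≠ a := by intro h; rw [h] at hca; omega
    have hc : leftF m c ≠ c := by intro h; rw [h] at hcc; omega
    have h1 := leftF_arc hm' ha
    have h2 := leftF_arc hm' hc
    exact hnc (bpt a) (bpt (leftF m a)) (bpt c) (bpt (leftF m c))
      (by simpa) (by simpa) (by simpa) h1 h2
  · intro a c hfa hca hac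
    have hc : leftF m c ≠ c := by intro h; rw [h] at hac; omega
    have h2 := leftF_arc hm' hc
    have h1 : n ≤ ((m (bpt a)) : ℕ) := (leftF_fixed_iff hm').1 hfa
    refine hnc (bpt c) (bpt (leftF m c)) (bpt a) (m (bpt a)) (by simpa) (by simpa) ?_ h2 rfl
    -- diagPos (bpt (leftF m c)) < diagPos (m (bpt a))
    have h3 : diagPos n (m (bpt a)) = 3*n-1-((m (bpt a)):ℕ) := by
      unfold diagPos
      rw [if_neg (by omega)]
    have h4 := (m (bpt a)).isLt
    rw [h3, pos_bpt]
    have := (leftF m c).isLt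
    omega
  · -- count
    refine Finset.card_bij' (fun (i : Fin n) _ => bpt i)
      (fun (a : Fin (2*n)) (ha : a ∈ Finset.univ.filter
          (fun a : Fin (2*n) => (a : ℕ) < n ∧ n ≤ ((m a) : ℕ))) =>
        (⟨(a:ℕ), (Finset.mem_filter.mp ha).2.1⟩ : Fin n)) ?_ ?_ ?_ ?_
    · intro i hi
      simp only [mem_filter, mem_univ, true_and] at hi ⊢
      exact ⟨i.isLt, (leftF_fixed_iff hm').1 hi⟩
    · intro a ha
      have h2 := (Finset.mem_filter.mp ha).2
      simp only [mem_filter, mem_univ, true_and]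
      rw [leftF_fixed_iff hm']
      have hb : bpt (⟨(a:ℕ), (Finset.mem_filter.mp ha).2.1⟩ : Fin n) = a := Fin.ext rfl
      rw [hb]
      exact h2.2
    · intro i hi
      exact Fin.ext rfl
    · intro a ha
      exact Fin.ext rfl

lemma rightF_isHalf (hm : IsDiagram n m) : IsHalf n (throughCount n m) (rightF m) := by
  obtain ⟨hfpf, hinv, hnc⟩ := hm
  have hm' : IsDiagram n m := ⟨hfpf, hinv, hnc⟩
  refine ⟨?_, ?_, ?_, ?_⟩
  · intro i
    by_cases h : rightF m i = i
    · rw [h, h]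
    · have h1 := rightF_arc hm' h
      have h2 : m (tpt (rightF m i)) = tpt i := by rw [← h1, hinv]
      have h3 : n ≤ ((m (tpt (rightF m i))) : ℕ) := by rw [h2]; exact tpt_ge i
      apply Fin.ext
      rw [rightF_val h3, h2]
      have h4 := i.isLt
      simp
      omega
  · intro a c hac hca hcc
    have ha : rightF m a ≠ a := by intro h; rw [h] at hca; omega
    have hc : rightF m c ≠ c := by intro h; rw [h] at hcc; omega
    have h1 := rightF_arc hm' ha
    have h2 := rightF_arc hm' hc
    exact hnc (tpt a) (tpt (rightF m a)) (tpt c) (tpt (rightF m c))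
      (by simp; omega) (by simp; omega) (by simp; omega) h1 h2
  · intro a c hfa hca hac
    have hc : rightF m c ≠ c := by intro h; rw [h] at hac; omega
    have h2 := rightF_arc hm' hc
    have h1 : ((m (tpt a)) : ℕ) < n := (rightF_fixed_iff hm').1 hfa
    -- arcs: (m (tpt a), tpt a) and (tpt c, tpt (rightF m c))
    have hma : m (m (tpt a)) = tpt a := hinv _
    refine hnc (m (tpt a)) (tpt a) (tpt c) (tpt (rightF m c)) ?_ ?_ ?_ hma h2
    · have : diagPos n (m (tpt a)) = ((m (tpt a)):ℕ) := by
        unfold diagPos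
        rw [if_pos h1]
      rw [this, pos_tpt]
      omega
    · rw [pos_tpt, pos_tpt]
      omega
    · rw [pos_tpt, pos_tpt]
      omega
  · -- count
    refine Finset.card_bij' (fun (i : Fin n) _ => m (tpt i))
      (fun (a : Fin (2*n)) (ha : a ∈ Finset.univ.filter
          (fun a : Fin (2*n) => (a : ℕ) < n ∧ n ≤ ((m a) : ℕ))) =>
        (⟨2*n-1-((m a):ℕ), by
          have h2 := (Finset.mem_filter.mp ha).2
          have := (m a).isLt
          omega⟩ : Fin n)) ?_ ?_ ?_ ?_
    · intro i hi
      simp only [mem_filter, mem_univ, true_and] at hi ⊢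
      have h1 : ((m (tpt i)) : ℕ) < n := (rightF_fixed_iff hm').1 hi
      refine ⟨h1, ?_⟩
      rw [hinv]
      exact tpt_ge i
    · intro a ha
      have h2 := (Finset.mem_filter.mp ha).2
      simp only [mem_filter, mem_univ, true_and]
      rw [rightF_fixed_iff hm']
      have h1 : tpt (⟨2*n-1-((m a):ℕ), by
          have h2 := (Finset.mem_filter.mp ha).2
          have := (m a).isLt
          omega⟩ : Fin n) = m a := by
        apply Fin.ext
        have := (m a).isLt
        simp
        omega
      rw [h1, hinv]
      exact h2.1
    · intro i hi
      simp only [mem_filter, mem_univ, true_and] at hi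
      apply Fin.ext
      show 2*n-1-((m (m (tpt i))) : ℕ) = (i : ℕ)
      rw [hinv]
      have := i.isLt
      simp
      omega
    · intro a ha
      have h2 := (Finset.mem_filter.mp ha).2
      have h1 : tpt (⟨2*n-1-((m a):ℕ), by
          have h2 := (Finset.mem_filter.mp ha).2
          have := (m a).isLt
          omega⟩ : Fin n) = m a := by
        apply Fin.ext
        have := (m a).isLt
        simp
        omega
      show m (tpt _) = a
      rw [h1, hinv]

variable {k : ℕ}

def fixSet (f : Fin n → Fin n) : Finset (Fin n) := Finset.univ.filter (fun i => f i = i)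

lemma mem_fixSet {f : Fin n → Fin n} {i : Fin n} : i ∈ fixSet f ↔ f i = i := by
  simp [fixSet]

def emb (f : Fin n → Fin n) (hF : (fixSet f).card = k) : Fin k ↪o Fin n :=
  (fixSet f).orderEmbOfFin hF

lemma emb_mem (f : Fin n → Fin n) (hF : (fixSet f).card = k) (s : Fin k) :
    emb f hF s ∈ fixSet f := Finset.orderEmbOfFin_mem _ hF s

lemma emb_fix (f : Fin n → Fin n) (hF : (fixSet f).card = k) (s : Fin k) :
    f (emb f hF s) = emb f hF s := mem_fixSet.1 (emb_mem f hF s)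

def idx (f : Fin n → Fin n) (hF : (fixSet f).card = k) (i : Fin n) (hi : i ∈ fixSet f) :
    Fin k := ((fixSet f).orderIsoOfFin hF).symm ⟨i, hi⟩

lemma emb_idx (f : Fin n → Fin n) (hF : (fixSet f).card = k) (i : Fin n) (hi : i ∈ fixSet f) :
    emb f hF (idx f hF i hi) = i := by
  have h1 : emb f hF (idx f hF i hi)
      = (((fixSet f).orderIsoOfFin hF) (idx f hF i hi) : Fin n) :=
    (Finset.coe_orderIsoOfFin_apply _ hF _).symm
  rw [h1]
  unfold idx
  rw [OrderIso.apply_symm_apply]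

lemma idx_emb (f : Fin n → Fin n) (hF : (fixSet f).card = k) (s : Fin k) :
    idx f hF (emb f hF s) (emb_mem f hF s) = s := by
  unfold idx
  have h1 : (⟨emb f hF s, emb_mem f hF s⟩ : {x // x ∈ fixSet f})
      = ((fixSet f).orderIsoOfFin hF) s :=
    Subtype.ext (Finset.coe_orderIsoOfFin_apply _ hF _).symm
  rw [h1, OrderIso.symm_apply_apply]

lemma emb_strictMono (f : Fin n → Fin n) (hF : (fixSet f).card = k) :
    StrictMono (emb f hF) := (emb f hF).strictMono

def rev (s : Fin k) : Fin k := ⟨k-1-(s:ℕ), by have := s.isLt; omega⟩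

@[simp] lemma rev_rev (s : Fin k) : rev (rev s) = s := by
  have := s.isLt
  apply Fin.ext
  show k-1-(k-1-(s:ℕ)) = (s:ℕ)
  omega

lemma rev_lt {s t : Fin k} (h : (s:ℕ) < (t:ℕ)) : (rev t : ℕ) < (rev s : ℕ) := by
  have := s.isLt
  have := t.isLt
  show k-1-(t:ℕ) < k-1-(s:ℕ)
  omega

def botIdx (a : Fin (2*n)) (h : (a:ℕ) < n) : Fin n := ⟨(a:ℕ), h⟩

def topIdx (a : Fin (2*n)) (h : ¬ (a:ℕ) < n) : Fin n :=
  ⟨2*n-1-(a:ℕ), by have := a.isLt; omega⟩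

@[simp] lemma botIdx_bpt (i : Fin n) (h : ((bpt i : Fin (2*n)) : ℕ) < n) :
    botIdx (bpt i) h = i := Fin.ext rfl

@[simp] lemma topIdx_tpt (i : Fin n) (h : ¬ ((tpt i : Fin (2*n)) : ℕ) < n) :
    topIdx (tpt i) h = i := by
  apply Fin.ext
  have := i.isLt
  show 2*n-1-((tpt i : Fin (2*n)) : ℕ) = (i:ℕ)
  simp
  omega

lemma bpt_botIdx (a : Fin (2*n)) (h : (a:ℕ) < n) : bpt (botIdx a h) = a := Fin.ext rfl

lemma tpt_topIdx (a : Fin (2*n)) (h : ¬ (a:ℕ) < n) : tpt (topIdx a h) = a := by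
  apply Fin.ext
  have := a.isLt
  show 2*n-1-(2*n-1-(a:ℕ)) = (a:ℕ)
  omega

def recon (f g : Fin n → Fin n) (hF : (fixSet f).card = k) (hG : (fixSet g).card = k) :
    Fin (2*n) → Fin (2*n) :=
  fun a =>
    if ha : (a:ℕ) < n then
      if hfi : botIdx a ha ∈ fixSet f then
        tpt (emb g hG (rev (idx f hF (botIdx a ha) hfi)))
      else bpt (f (botIdx a ha))
    else
      if hgi : topIdx a ha ∈ fixSet g then
        bpt (emb f hF (rev (idx g hG (topIdx a ha) hgi)))
      else tpt (g (topIdx a ha))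

variable {f g : Fin n → Fin n} {hF : (fixSet f).card = k} {hG : (fixSet g).card = k}

lemma recon_bpt_fix (i : Fin n) (hfi : i ∈ fixSet f) :
    recon f g hF hG (bpt i) = tpt (emb g hG (rev (idx f hF i hfi))) := by
  unfold recon
  rw [dif_pos (show ((bpt i : Fin (2*n)) : ℕ) < n from i.isLt)]
  simp only [botIdx_bpt]
  rw [dif_pos hfi]

lemma recon_bpt_arc (i : Fin n) (hfi : i ∉ fixSet f) :
    recon f g hF hG (bpt i) = bpt (f i) := by
  unfold recon
  rw [dif_pos (show ((bpt i : Fin (2*n)) : ℕ) < n from i.isLt)]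
  simp only [botIdx_bpt]
  rw [dif_neg hfi]

lemma recon_tpt_fix (i : Fin n) (hgi : i ∈ fixSet g) :
    recon f g hF hG (tpt i) = bpt (emb f hF (rev (idx g hG i hgi))) := by
  unfold recon
  rw [dif_neg (show ¬ ((tpt i : Fin (2*n)) : ℕ) < n from by have := tpt_ge i; omega)]
  simp only [topIdx_tpt]
  rw [dif_pos hgi]

lemma recon_tpt_arc (i : Fin n) (hgi : i ∉ fixSet g) :
    recon f g hF hG (tpt i) = tpt (g i) := by
  unfold recon
  rw [dif_neg (show ¬ ((tpt i : Fin (2*n)) : ℕ) < n from by have := tpt_ge i; omega)]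
  simp only [topIdx_tpt]
  rw [dif_neg hgi]


lemma recon_arc {a b : Fin (2*n)} (hab : recon f g hF hG a = b)
    (hdP : diagPos n a < diagPos n b) :
    (∃ i j : Fin n, a = bpt i ∧ b = bpt j ∧ f i = j ∧ i ∉ fixSet f) ∨
    (∃ i j : Fin n, a = tpt i ∧ b = tpt j ∧ g i = j ∧ i ∉ fixSet g) ∨
    (∃ s : Fin k, a = bpt (emb f hF s) ∧ b = tpt (emb g hG (rev s))) := by
  by_cases ha : (a:ℕ) < n
  · by_cases hfi : botIdx a ha ∈ fixSet f
    · right; right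
      have h := recon_bpt_fix (f:=f) (g:=g) (hF:=hF) (hG:=hG) (botIdx a ha) hfi
      rw [bpt_botIdx] at h
      refine ⟨idx f hF (botIdx a ha) hfi, ?_, ?_⟩
      · rw [emb_idx]
        exact (bpt_botIdx a ha).symm
      · rw [← hab, h]
    · left
      have h := recon_bpt_arc (f:=f) (g:=g) (hF:=hF) (hG:=hG) (botIdx a ha) hfi
      rw [bpt_botIdx] at h
      exact ⟨botIdx a ha, f (botIdx a ha), (bpt_botIdx a ha).symm, by rw [← hab, h], rfl, hfi⟩
  · by_cases hgi : topIdx a ha ∈ fixSet g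
    · exfalso
      have h := recon_tpt_fix (f:=f) (g:=g) (hF:=hF) (hG:=hG) (topIdx a ha) hgi
      rw [tpt_topIdx] at h
      have hb : b = bpt (emb f hF (rev (idx g hG (topIdx a ha) hgi))) := by rw [← hab, h]
      have h1 : diagPos n a = 3*n-1-(a:ℕ) := by unfold diagPos; rw [if_neg ha]
      have h2 : diagPos n b = ((emb f hF (rev (idx g hG (topIdx a ha) hgi))) : ℕ) := by
        rw [hb, pos_bpt]
      have := a.isLt
      have := (emb f hF (rev (idx g hG (topIdx a ha) hgi))).isLt
      omega
    · right; left
      have h := recon_tpt_arc (f:=f) (g:=g) (hF:=hF) (hG:=hG) (topIdx a ha) hgi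
      rw [tpt_topIdx] at h
      exact ⟨topIdx a ha, g (topIdx a ha), (tpt_topIdx a ha).symm, by rw [← hab, h], rfl, hgi⟩

lemma recon_isDiagram (hf : IsHalf n k f) (hg : IsHalf n k g) :
    IsDiagram n (recon f g hF hG) := by
  refine ⟨?_, ?_, ?_⟩
  · -- fixed point free
    intro a
    by_cases ha : (a:ℕ) < n
    · by_cases hfi : botIdx a ha ∈ fixSet f
      · have h := recon_bpt_fix (f:=f) (g:=g) (hF:=hF) (hG:=hG) (botIdx a ha) hfi
        rw [bpt_botIdx] at h
        rw [h]
        intro hcon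
        have hv := congrArg Fin.val hcon
        have h2 := tpt_ge (emb g hG (rev (idx f hF (botIdx a ha) hfi)))
        omega
      · have h := recon_bpt_arc (f:=f) (g:=g) (hF:=hF) (hG:=hG) (botIdx a ha) hfi
        rw [bpt_botIdx] at h
        rw [h]
        intro hcon
        apply hfi
        rw [mem_fixSet]
        have hv := congrArg Fin.val hcon
        exact Fin.ext hv
    · by_cases hgi : topIdx a ha ∈ fixSet g
      · have h := recon_tpt_fix (f:=f) (g:=g) (hF:=hF) (hG:=hG) (topIdx a ha) hgi
        rw [tpt_topIdx] at h
        rw [h]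
        intro hcon
        have hv := congrArg Fin.val hcon
        have h3 := (emb f hF (rev (idx g hG (topIdx a ha) hgi))).isLt
        simp only [bpt_val] at hv
        omega
      · have h := recon_tpt_arc (f:=f) (g:=g) (hF:=hF) (hG:=hG) (topIdx a ha) hgi
        rw [tpt_topIdx] at h
        rw [h]
        intro hcon
        apply hgi
        rw [mem_fixSet]
        have : tpt (g (topIdx a ha)) = tpt (topIdx a ha) := by rw [hcon, tpt_topIdx]
        exact tpt_inj this
  · -- involution
    intro a
    by_cases ha : (a:ℕ) < n
    · by_cases hfi : botIdx a ha ∈ fixSet f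
      · have h := recon_bpt_fix (f:=f) (g:=g) (hF:=hF) (hG:=hG) (botIdx a ha) hfi
        rw [bpt_botIdx] at h
        rw [h, recon_tpt_fix _ (emb_mem g hG _), idx_emb, rev_rev, emb_idx, bpt_botIdx]
      · have h := recon_bpt_arc (f:=f) (g:=g) (hF:=hF) (hG:=hG) (botIdx a ha) hfi
        rw [bpt_botIdx] at h
        have hfnot : f (botIdx a ha) ∉ fixSet f := by
          intro hmem
          apply hfi
          rw [mem_fixSet] at hmem ⊢
          exact hmem.symm.trans (hf.1 _)
        rw [h, recon_bpt_arc _ hfnot, hf.1, bpt_botIdx]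
    · by_cases hgi : topIdx a ha ∈ fixSet g
      · have h := recon_tpt_fix (f:=f) (g:=g) (hF:=hF) (hG:=hG) (topIdx a ha) hgi
        rw [tpt_topIdx] at h
        rw [h, recon_bpt_fix _ (emb_mem f hF _), idx_emb, rev_rev, emb_idx, tpt_topIdx]
      · have h := recon_tpt_arc (f:=f) (g:=g) (hF:=hF) (hG:=hG) (topIdx a ha) hgi
        rw [tpt_topIdx] at h
        have hgnot : g (topIdx a ha) ∉ fixSet g := by
          intro hmem
          apply hgi
          rw [mem_fixSet] at hmem ⊢
          exact hmem.symm.trans (hg.1 _)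
        rw [h, recon_tpt_arc _ hgnot, hg.1, tpt_topIdx]
  · -- noncrossing
    intro a b c d h1 h2 h3 hab hcd
    have hab' := recon_arc hab (by omega)
    have hcd' := recon_arc hcd (by omega)
    rcases hab' with ⟨i1, j1, rfl, rfl, harc1, hnf1⟩ | ⟨i1, j1, rfl, rfl, harc1, hnf1⟩ |
        ⟨s, rfl, rfl⟩ <;>
      rcases hcd' with ⟨i2, j2, rfl, rfl, harc2, hnf2⟩ | ⟨i2, j2, rfl, rfl, harc2, hnf2⟩ |
        ⟨t, rfl, rfl⟩
    · -- bb bb : crossing in f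
      simp only [pos_bpt] at h1 h2 h3
      exact hf.2.1 i1 i2 h1 (by rw [harc1]; omega) (by rw [harc1, harc2]; omega)
    · -- bb tt : positions contradict
      simp only [pos_bpt, pos_tpt] at h1 h2 h3
      have := j1.isLt
      omega
    · -- bb through : fixed point of f covered
      simp only [pos_bpt, pos_tpt] at h1 h2 h3
      exact hf.2.2.1 (emb f hF t) i1 (emb_fix f hF t) h1 (by rw [harc1]; omega)
    · -- tt bb
      simp only [pos_bpt, pos_tpt] at h1 h2 h3
      have := i2.isLt
      omega
    · -- tt tt : crossing in g
      simp only [pos_tpt] at h1 h2 h3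
      exact hg.2.1 i1 i2 (by omega) (by rw [harc1]; omega) (by rw [harc1, harc2]; omega)
    · -- tt through
      simp only [pos_bpt, pos_tpt] at h1 h2 h3
      have := (emb f hF t).isLt
      omega
    · -- through bb
      simp only [pos_bpt, pos_tpt] at h1 h2 h3
      have := j2.isLt
      omega
    · -- through tt : fixed point of g covered
      simp only [pos_bpt, pos_tpt] at h1 h2 h3
      exact hg.2.2.1 (emb g hG (rev s)) i2 (emb_fix g hG _) (by omega)
        (by rw [harc2]; omega)
    · -- through through : nesting
      simp only [pos_bpt, pos_tpt] at h1 h2 h3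
      have hst : s < t := by
        rw [← (emb_strictMono f hF).lt_iff_lt, Fin.lt_def]
        omega
      have hrev : rev t < rev s := by
        rw [Fin.lt_def]
        exact rev_lt hst
      have hemb : emb g hG (rev t) < emb g hG (rev s) := (emb_strictMono g hG) hrev
      rw [Fin.lt_def] at hemb
      omega


lemma recon_tc : throughCount n (recon f g hF hG) = k := by
  have key : throughCount n (recon f g hF hG) = (fixSet f).card := by
    unfold throughCount
    refine Finset.card_bij' (fun (a : Fin (2*n)) (ha : a ∈ Finset.univ.filter
        (fun a : Fin (2*n) => (a : ℕ) < n ∧ n ≤ ((recon f g hF hG a) : ℕ))) =>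
        botIdx a (Finset.mem_filter.mp ha).2.1)
      (fun (i : Fin n) _ => bpt i) ?_ ?_ ?_ ?_
    · intro a ha
      have h2 := (Finset.mem_filter.mp ha).2
      by_contra hcon
      have h := recon_bpt_arc (f:=f) (g:=g) (hF:=hF) (hG:=hG) (botIdx a h2.1) hcon
      rw [bpt_botIdx] at h
      have h3 := h2.2
      rw [h] at h3
      have := (f (botIdx a h2.1)).isLt
      simp only [bpt_val] at h3
      omega
    · intro i hi
      have hi' : i ∈ fixSet f := hi
      simp only [Finset.mem_filter, Finset.mem_univ, true_and]
      refine ⟨i.isLt, ?_⟩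
      have h := recon_bpt_fix (f:=f) (g:=g) (hF:=hF) (hG:=hG) i hi'
      rw [h]
      exact tpt_ge _
    · intro a ha
      exact bpt_botIdx a _
    · intro i hi
      exact botIdx_bpt i _
  rw [key, hF]

lemma leftF_recon : leftF (recon f g hF hG) = f := by
  funext i
  by_cases hfi : i ∈ fixSet f
  · have h := recon_bpt_fix (f:=f) (g:=g) (hF:=hF) (hG:=hG) i hfi
    have hge : n ≤ ((recon f g hF hG (bpt i)) : ℕ) := by rw [h]; exact tpt_ge _
    unfold leftF
    rw [dif_neg (by omega)]
    exact (mem_fixSet.1 hfi).symm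
  · have h := recon_bpt_arc (f:=f) (g:=g) (hF:=hF) (hG:=hG) i hfi
    have hlt : ((recon f g hF hG (bpt i)) : ℕ) < n := by rw [h]; exact (f i).isLt
    unfold leftF
    rw [dif_pos hlt]
    apply Fin.ext
    show ((recon f g hF hG (bpt i)) : ℕ) = ((f i) : ℕ)
    rw [h]
    rfl

lemma rightF_recon : rightF (recon f g hF hG) = g := by
  funext i
  by_cases hgi : i ∈ fixSet g
  · have h := recon_tpt_fix (f:=f) (g:=g) (hF:=hF) (hG:=hG) i hgi
    have hlt : ((recon f g hF hG (tpt i)) : ℕ) < n := by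
      rw [h]
      exact (emb f hF (rev (idx g hG i hgi))).isLt
    unfold rightF
    rw [dif_neg (by omega)]
    exact (mem_fixSet.1 hgi).symm
  · have h := recon_tpt_arc (f:=f) (g:=g) (hF:=hF) (hG:=hG) i hgi
    have hge : n ≤ ((recon f g hF hG (tpt i)) : ℕ) := by rw [h]; exact tpt_ge _
    unfold rightF
    rw [dif_pos hge]
    apply Fin.ext
    show 2*n-1-((recon f g hF hG (tpt i)) : ℕ) = ((g i) : ℕ)
    rw [h]
    have := (g i).isLt
    simp
    omega


lemma pos_top {x : Fin (2*n)} (hx : ¬((x:ℕ) < n)) : diagPos n x = 3*n-1-(x:ℕ) := by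
  unfold diagPos
  rw [if_neg hx]

lemma through_partner {m : Fin (2*n) → Fin (2*n)} (hm : IsDiagram n m)
    (hF : (fixSet (leftF m)).card = k) (hG : (fixSet (rightF m)).card = k) (s : Fin k) :
    m (bpt (emb (leftF m) hF s)) = tpt (emb (rightF m) hG (rev s)) := by
  have hinv := hm.2.1
  have hnc := hm.2.2
  have hpart_ge : ∀ t : Fin k, n ≤ ((m (bpt (emb (leftF m) hF t))) : ℕ) := fun t =>
    (leftF_fixed_iff hm).1 (mem_fixSet.1 (emb_mem _ hF t))
  set φ : Fin k → Fin n := fun t =>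
    (⟨2*n-1-((m (bpt (emb (leftF m) hF (rev t)))) : ℕ), by
      have := (m (bpt (emb (leftF m) hF (rev t)))).isLt
      have := (emb (leftF m) hF (rev t)).isLt
      have := hpart_ge (rev t)
      omega⟩ : Fin n) with hφ
  have htpt : ∀ t : Fin k, tpt (φ t) = m (bpt (emb (leftF m) hF (rev t))) := by
    intro t
    exact tpt_mk (hpart_ge (rev t))
  have hφmem : ∀ t, φ t ∈ fixSet (rightF m) := by
    intro t
    rw [mem_fixSet, rightF_fixed_iff hm, htpt, hinv]
    exact (emb (leftF m) hF (rev t)).isLt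
  have hφmono : StrictMono φ := by
    intro s' t' hst
    have h1 : emb (leftF m) hF (rev t') < emb (leftF m) hF (rev s') :=
      (emb_strictMono _ hF) (by rw [Fin.lt_def]; exact rev_lt hst)
    set i1 := emb (leftF m) hF (rev t')
    set i2 := emb (leftF m) hF (rev s')
    have hv1 : n ≤ ((m (bpt i1)) : ℕ) := hpart_ge (rev t')
    have hv2 : n ≤ ((m (bpt i2)) : ℕ) := hpart_ge (rev s')
    have hlt1 := (m (bpt i1)).isLt
    have hlt2 := (m (bpt i2)).isLt
    have hne : ((m (bpt i1)) : ℕ) ≠ ((m (bpt i2)) : ℕ) := by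
      intro hh
      have : m (bpt i1) = m (bpt i2) := Fin.ext hh
      have h4 := congrArg m this
      rw [hinv, hinv] at h4
      have := bpt_inj h4
      rw [this] at h1
      exact lt_irrefl _ h1
    have hkey : ((m (bpt i1)) : ℕ) < ((m (bpt i2)) : ℕ) := by
      by_contra hcon
      push_neg at hcon
      refine hnc (bpt i1) (m (bpt i1)) (bpt i2) (m (bpt i2)) ?_ ?_ ?_ rfl rfl
      · rw [pos_bpt, pos_bpt]
        rw [Fin.lt_def] at h1
        exact h1
      · rw [pos_bpt, pos_top (x := m (bpt i1)) (by omega)]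
        have := i2.isLt
        omega
      · rw [pos_top (x := m (bpt i1)) (by omega), pos_top (x := m (bpt i2)) (by omega)]
        omega
    show (φ s' : ℕ) < (φ t' : ℕ)
    show 2*n-1-((m (bpt i2)) : ℕ) < 2*n-1-((m (bpt i1)) : ℕ)
    omega
  have hφeq : φ = ⇑((fixSet (rightF m)).orderEmbOfFin hG) :=
    Finset.orderEmbOfFin_unique hG hφmem hφmono
  have h2 : emb (rightF m) hG (rev s) = φ (rev s) := (congrFun hφeq (rev s)).symm
  rw [h2, htpt, rev_rev]

lemma recon_eq {m : Fin (2*n) → Fin (2*n)} (hm : IsDiagram n m)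
    (hF : (fixSet (leftF m)).card = k) (hG : (fixSet (rightF m)).card = k) :
    recon (leftF m) (rightF m) hF hG = m := by
  funext a
  by_cases ha : (a:ℕ) < n
  · by_cases hfi : botIdx a ha ∈ fixSet (leftF m)
    · have h := recon_bpt_fix (hF:=hF) (hG:=hG) (botIdx a ha) hfi
      rw [bpt_botIdx] at h
      rw [h]
      have hkey := through_partner hm hF hG (idx (leftF m) hF (botIdx a ha) hfi)
      rw [emb_idx, bpt_botIdx] at hkey
      exact hkey.symm
    · have h := recon_bpt_arc (hF:=hF) (hG:=hG) (botIdx a ha) hfi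
      rw [bpt_botIdx] at h
      rw [h]
      have hne : leftF m (botIdx a ha) ≠ botIdx a ha := fun hh => hfi (mem_fixSet.2 hh)
      have harc := leftF_arc hm hne
      rw [← harc, bpt_botIdx]
  · by_cases hgi : topIdx a ha ∈ fixSet (rightF m)
    · have h := recon_tpt_fix (hF:=hF) (hG:=hG) (topIdx a ha) hgi
      rw [tpt_topIdx] at h
      rw [h]
      have hkey := through_partner hm hF hG (rev (idx (rightF m) hG (topIdx a ha) hgi))
      rw [rev_rev, emb_idx, tpt_topIdx] at hkey
      have h5 := congrArg m hkey
      rw [hm.2.1] at h5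
      exact h5
    · have h := recon_tpt_arc (hF:=hF) (hG:=hG) (topIdx a ha) hgi
      rw [tpt_topIdx] at h
      rw [h]
      have hne : rightF m (topIdx a ha) ≠ topIdx a ha := fun hh => hgi (mem_fixSet.2 hh)
      have harc := rightF_arc hm hne
      rw [← harc, tpt_topIdx]

def diagHalfEquiv (n k : ℕ) :
    {m : Fin (2*n) → Fin (2*n) // IsDiagram n m ∧ throughCount n m = k} ≃
    ({f : Fin n → Fin n // IsHalf n k f} × {g : Fin n → Fin n // IsHalf n k g}) where
  toFun := fun p =>
    (⟨leftF p.1, by have := leftF_isHalf p.2.1; rwa [p.2.2] at this⟩,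
     ⟨rightF p.1, by have := rightF_isHalf p.2.1; rwa [p.2.2] at this⟩)
  invFun := fun q =>
    ⟨recon q.1.1 q.2.1 q.1.2.2.2.2 q.2.2.2.2.2,
      recon_isDiagram q.1.2 q.2.2, recon_tc⟩
  left_inv := fun p => Subtype.ext (recon_eq p.2.1 _ _)
  right_inv := fun q => by
    apply Prod.ext
    · exact Subtype.ext leftF_recon
    · exact Subtype.ext rightF_recon

lemma card_diag (n k : ℕ) :
    Nat.card {m : Fin (2*n) → Fin (2*n) // IsDiagram n m ∧ throughCount n m = k}
      = Nat.card {f : Fin n → Fin n // IsHalf n k f} *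
        Nat.card {f : Fin n → Fin n // IsHalf n k f} := by
  rw [Nat.card_congr (diagHalfEquiv n k), Nat.card_prod]

end DiagAux


lemma card_half_eq : ∀ n k : ℕ, (Nat.card {f : Fin n → Fin n // IsHalf n k f} : ℤ) = Bk n k := by
  intro n
  induction n with
  | zero =>
    intro k
    cases k with
    | zero =>
      rw [IsHalfAux.card_half_base0, Bk, if_pos (by omega : (0:ℕ) ≤ 0 ∧ (0-0) % 2 = 0)]
      norm_num
    | succ k =>
      rw [IsHalfAux.card_half_base_pos, Bk, if_neg (by omega)]
      norm_num
  | succ n ih =>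
    intro k
    cases k with
    | zero =>
      rw [IsHalfAux.card_half_zero, ih 1, BkAux.Bk_zero]
    | succ k =>
      rw [IsHalfAux.card_half_succ, BkAux.Bk_succ]
      push_cast
      rw [ih k, ih (k+2)]

/-- The number of planar diagrams on `N` strands with exactly `k` through-strands,
where `k ≡ N (mod 2)`, is `(C(N,(N-k)/2) - C(N,(N-k)/2 - 1))²` (with the convention
`C(N,-1) = 0`), and summing over all `k` recovers the Catalan number `C_N`. -/
theorem stmt_18 (N : ℕ) :
    (∀ k : ℕ, k ≤ N → k % 2 = N % 2 →
      (Nat.card {m : Fin (2*N) → Fin (2*N) // IsDiagram N m ∧ throughCount N m = k} : ℤ)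
        = ((N.choose ((N - k) / 2) : ℤ) -
            (if (N - k) / 2 = 0 then 0 else (N.choose ((N - k) / 2 - 1) : ℤ))) ^ 2) ∧
    ∑ k ∈ Finset.range (N + 1),
        Nat.card {m : Fin (2*N) → Fin (2*N) // IsDiagram N m ∧ throughCount N m = k}
      = catalan N := by
  have hcard : ∀ k : ℕ,
      (Nat.card {m : Fin (2*N) → Fin (2*N) // IsDiagram N m ∧ throughCount N m = k} : ℤ)
        = (Bk N k)^2 := by
    intro k
    rw [DiagAux.card_diag N k]
    push_cast
    rw [card_half_eq N k]
    ring
  constructor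
  · intro k hk hpar
    rw [hcard k]
    have hcond : k ≤ N ∧ (N - k) % 2 = 0 := ⟨hk, by omega⟩
    rw [Bk, if_pos hcond]
  · have hsum : ((∑ k ∈ Finset.range (N + 1),
        Nat.card {m : Fin (2*N) → Fin (2*N) // IsDiagram N m ∧ throughCount N m = k} : ℕ) : ℤ)
        = ((catalan N : ℕ) : ℤ) := by
      push_cast
      rw [Finset.sum_congr rfl (fun k _ => hcard k), BkAux.sum_bk_sq]
    exact_mod_cast hsum
end
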